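/- arXiv:2210.11706 — 2 statements merged into one kernel-verified Lean document; each statement's English description precedes it below -/
import Mathlib

section
/- If in the chain rule setting additionally S₁|_X and S₂ are graph-convex and X is a smooth manifold around x̄, then S|_X = S₂∘S₁|_X is graph-convex and equality holds: D*_X S(x̄|ū) = D*_X S₁(x̄|w̄) ∘ D*S₂(w̄|ū) for every w̄ ∈ S₁|_X(x̄) ∩ S₂⁻¹(ū). -/
open Filter Topology Set Metric
open scoped ENNReal NNReal

noncomputable section

/-- Euclidean space ℝⁿ. -/
abbrev Euc (n : ℕ) := EuclideanSpace ℝ (Fin n)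

variable {E F : Type*}

/-- Set-valued metric (nearest-point) projection onto `C`. -/
def projSet [NormedAddCommGroup E] (C : Set E) (v : E) : Set E :=
  {y | y ∈ C ∧ ‖v - y‖ = Metric.infDist v C}

/-- Bouligand (contingent) tangent cone to `C` at `x`. -/
def tanCone [NormedAddCommGroup E] [NormedSpace ℝ E] (C : Set E) (x : E) : Set E :=
  {w | ∃ t : ℕ → ℝ, ∃ w' : ℕ → E, (∀ k, 0 < t k) ∧ Tendsto t atTop (𝓝 0) ∧
      Tendsto w' atTop (𝓝 w) ∧ ∀ k, x + t k • w' k ∈ C}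

section Normals
variable [NormedAddCommGroup E] [InnerProductSpace ℝ E]
  [NormedAddCommGroup F] [InnerProductSpace ℝ F]

/-- Fréchet (regular) normal cone to `C` at `x`. -/
def fNormal (C : Set E) (x : E) : Set E :=
  {v | x ∈ C ∧ ∀ ε > 0, ∃ δ > 0, ∀ y ∈ C, ‖y - x‖ < δ → (inner ℝ v (y - x) : ℝ) ≤ ε * ‖y - x‖}

/-- Limiting (Mordukhovich) normal cone to `C` at `x`. -/
def lNormal (C : Set E) (x : E) : Set E :=
  {v | x ∈ C ∧ ∃ xk vk : ℕ → E, (∀ k, vk k ∈ fNormal C (xk k)) ∧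
      Tendsto xk atTop (𝓝 x) ∧ Tendsto vk atTop (𝓝 v)}

/-- Fréchet normal cone to a subset of a product space (componentwise inner ℝ product). -/
def fNormal2 (D : Set (E × F)) (z : E × F) : Set (E × F) :=
  {v | z ∈ D ∧ ∀ ε > 0, ∃ δ > 0, ∀ z' ∈ D, ‖z' - z‖ < δ →
      (inner ℝ v.1 (z'.1 - z.1) : ℝ) + (inner ℝ v.2 (z'.2 - z.2) : ℝ) ≤ ε * ‖z' - z‖}

/-- Limiting normal cone to a subset of a product space. -/
def lNormal2 (D : Set (E × F)) (z : E × F) : Set (E × F) :=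
  {v | z ∈ D ∧ ∃ zk vk : ℕ → E × F, (∀ k, vk k ∈ fNormal2 D (zk k)) ∧
      Tendsto zk atTop (𝓝 z) ∧ Tendsto vk atTop (𝓝 v)}

/-- Graph of a set-valued mapping. -/
def gph (S : E → Set F) : Set (E × F) := {z | z.2 ∈ S z.1}

/-- Restriction of a set-valued mapping to a set `X`. -/
def restr (S : E → Set F) (X : Set E) : E → Set F := fun x => {u | u ∈ S x ∧ x ∈ X}

/-- Fréchet coderivative of `S` at `x` for `u`. -/
def fCoderiv (S : E → Set F) (x : E) (u : F) (u' : F) : Set E :=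
  {x' | (x', -u') ∈ fNormal2 (gph S) (x, u)}

/-- Limiting coderivative of `S` at `x` for `u`. -/
def coderiv (S : E → Set F) (x : E) (u : F) (u' : F) : Set E :=
  {x' | (x', -u') ∈ lNormal2 (gph S) (x, u)}

/-- Projection of the limiting normal cone of `gph (restr S X)` at `z`
onto `T_X(z.1) × F` (projection acting on the first component only). -/
def projNormal (S : E → Set F) (X : Set E) (z : E × F) : Set (E × F) :=
  {q | ∃ v : E, (v, q.2) ∈ lNormal2 (gph (restr S X)) z ∧ q.1 ∈ projSet (tanCone X z.1) v}

/-- Projectional coderivative of `S` relative to `X` at `x` for `u`: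
the outer limit of the projected normal cones along `gph (restr S X)`. -/
def projCoderiv (S : E → Set F) (X : Set E) (x : E) (u : F) (u' : F) : Set E :=
  {t | ∃ zk qk : ℕ → E × F,
      (∀ k, zk k ∈ gph (restr S X)) ∧ (∀ k, qk k ∈ projNormal S X (zk k)) ∧
      Tendsto zk atTop (𝓝 (x, u)) ∧ Tendsto qk atTop (𝓝 (t, -u'))}

/-- `C` is locally closed at `z`. -/
def LocallyClosedAt (C : Set E) (z : E) : Prop :=
  ∃ ε > 0, IsClosed (C ∩ Metric.closedBall z ε)

/-- `S` has the Lipschitz-like (Aubin) property relative to `X` at `xb` for `ub`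
with constant `κ`. -/
def LipschitzLikeRel (S : E → Set F) (X : Set E) (xb : E) (ub : F) (κ : ℝ) : Prop :=
  LocallyClosedAt (gph S) (xb, ub) ∧
  ∃ V ∈ 𝓝 xb, ∃ W ∈ 𝓝 ub, ∀ x ∈ X ∩ V, ∀ x' ∈ X ∩ V, ∀ u ∈ S x' ∩ W,
    ∃ u'' ∈ S x, ‖u - u''‖ ≤ κ * ‖x' - x‖

end Normals

/-- `X ⊆ ℝⁿ` is a smooth manifold around `x₀`, witnessed by the chart data
`(O, Φ, Φ')`: `O` open containing `x₀`, `X ∩ O = Φ⁻¹(0)`, `Φ` is `C¹` on `O`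
with derivative `Φ'`, and `Φ'(x₀)` is surjective (full rank). -/
def IsSmoothMfdChart {n c : ℕ} (X : Set (Euc n)) (x₀ : Euc n) (O : Set (Euc n))
    (Φ : Euc n → Euc c) (Φ' : Euc n → (Euc n →L[ℝ] Euc c)) : Prop :=
  IsOpen O ∧ x₀ ∈ O ∧ X ∩ O = {x | x ∈ O ∧ Φ x = 0} ∧
  (∀ x ∈ O, HasFDerivAt Φ (Φ' x) x) ∧ ContinuousOn Φ' O ∧
  Function.Surjective (Φ' x₀)

/-- `X ⊆ ℝⁿ` is a smooth manifold around `x₀`. -/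
def SmoothManifoldAround {n : ℕ} (X : Set (Euc n)) (x₀ : Euc n) : Prop :=
  ∃ (c : ℕ) (O : Set (Euc n)) (Φ : Euc n → Euc c) (Φ' : Euc n → (Euc n →L[ℝ] Euc c)),
    IsSmoothMfdChart X x₀ O Φ Φ'

/-- Composition of set-valued mappings: `(S₂ ∘ S₁)(x) = ⋃_{w ∈ S₁(x)} S₂(w)`. -/
def scomp {E P F : Type*} (S₂ : P → Set F) (S₁ : E → Set P) : E → Set F :=
  fun x => {u | ∃ w ∈ S₁ x, u ∈ S₂ w}

/-- Outer semicontinuity of a set-valued mapping relative to a set `X`. -/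
def OscRel {E P : Type*} [TopologicalSpace E] [TopologicalSpace P]
    (S : E → Set P) (X : Set E) : Prop :=
  ∀ x ∈ X, ∀ (xk : ℕ → E) (wk : ℕ → P) (w : P),
    (∀ k, xk k ∈ X) → (∀ k, wk k ∈ S (xk k)) →
    Filter.Tendsto xk Filter.atTop (nhds x) → Filter.Tendsto wk Filter.atTop (nhds w) →
    w ∈ S x

section AuxNormals

variable {E F : Type*} [NormedAddCommGroup E] [InnerProductSpace ℝ E]
  [NormedAddCommGroup F] [InnerProductSpace ℝ F]

/-- The convex-analysis normal cone to a subset of a product space. -/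
def cN2 (D : Set (E × F)) (z : E × F) : Set (E × F) :=
  {v | z ∈ D ∧ ∀ z' ∈ D, (inner ℝ v.1 (z'.1 - z.1) : ℝ) + (inner ℝ v.2 (z'.2 - z.2) : ℝ) ≤ 0}

lemma cN2_subset_fNormal2 (D : Set (E × F)) (z : E × F) : cN2 D z ⊆ fNormal2 D z := by
  rintro v ⟨hz, hv⟩
  exact ⟨hz, fun ε hε => ⟨1, one_pos, fun z' hz' _ =>
    (hv z' hz').trans (by positivity)⟩⟩

lemma fNormal2_subset_cN2 {D : Set (E × F)} (hD : Convex ℝ D) (z : E × F) :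
    fNormal2 D z ⊆ cN2 D z := by
  rintro v ⟨hz, hv⟩
  refine ⟨hz, fun z' hz' => ?_⟩
  by_contra hlt
  push_neg at hlt
  set P : ℝ := (inner ℝ v.1 (z'.1 - z.1) : ℝ) + (inner ℝ v.2 (z'.2 - z.2) : ℝ) with hP
  have hPpos : 0 < P := hlt
  have hzn : 0 ≤ ‖z' - z‖ := norm_nonneg _
  -- choose ε with ε * ‖z' - z‖ < P
  set ε : ℝ := P / (2 * (‖z' - z‖ + 1)) with hε
  have hεpos : 0 < ε := by positivity
  obtain ⟨δ, hδpos, hδ⟩ := hv ε hεpos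
  -- choose τ small
  have hden : (0:ℝ) < ‖z' - z‖ + 1 := by positivity
  set τ : ℝ := min (1:ℝ) (δ / (2 * (‖z' - z‖ + 1))) with hτ
  have hτpos : 0 < τ := lt_min one_pos (by positivity)
  have hτ1 : τ ≤ 1 := min_le_left _ _
  have hmem : z + τ • (z' - z) ∈ D := by
    have h := hD hz hz' (a := 1 - τ) (b := τ) (by linarith) hτpos.le (by ring)
    have : (1 - τ) • z + τ • z' = z + τ • (z' - z) := by
      rw [smul_sub, sub_smul, one_smul]; abel
    rwa [this] at h
  have hnorm : ‖z + τ • (z' - z) - z‖ = τ * ‖z' - z‖ := by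
    rw [add_sub_cancel_left, norm_smul, Real.norm_eq_abs, abs_of_pos hτpos]
  have hnlt : ‖z + τ • (z' - z) - z‖ < δ := by
    rw [hnorm]
    calc τ * ‖z' - z‖ ≤ δ / (2 * (‖z' - z‖ + 1)) * ‖z' - z‖ := by
          apply mul_le_mul_of_nonneg_right (min_le_right _ _) hzn
      _ < δ := by
          rw [div_mul_eq_mul_div, div_lt_iff₀ (by positivity)]
          nlinarith [hδpos, hzn]
  have hineq := hδ _ hmem hnlt
  have hfst : (z + τ • (z' - z)).1 - z.1 = τ • (z'.1 - z.1) := by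
    simp [Prod.smul_fst, Prod.fst_add, smul_sub]
  have hsnd : (z + τ • (z' - z)).2 - z.2 = τ • (z'.2 - z.2) := by
    simp [Prod.smul_snd, Prod.snd_add, smul_sub]
  rw [hfst, hsnd, real_inner_smul_right, real_inner_smul_right, hnorm] at hineq
  have h2 : τ * P ≤ ε * (τ * ‖z' - z‖) := by rw [hP]; ring_nf; ring_nf at hineq; linarith
  have h3 : P ≤ ε * ‖z' - z‖ := by
    have := (mul_le_mul_iff_right₀ hτpos).mp (by linarith [h2] : τ * P ≤ τ * (ε * ‖z' - z‖))
    exact this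
  have h4 : ε * ‖z' - z‖ < P := by
    rw [hε, div_mul_eq_mul_div, div_lt_iff₀ (by positivity)]
    nlinarith [hPpos, hzn]
  linarith

lemma fNormal2_eq_cN2 {D : Set (E × F)} (hD : Convex ℝ D) (z : E × F) :
    fNormal2 D z = cN2 D z :=
  le_antisymm (fNormal2_subset_cN2 hD z) (cN2_subset_fNormal2 D z)

lemma cN2_subset_lNormal2 (D : Set (E × F)) (z : E × F) : cN2 D z ⊆ lNormal2 D z := by
  intro v hv
  exact ⟨hv.1, fun _ => z, fun _ => v, fun _ => cN2_subset_fNormal2 D z hv,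
    tendsto_const_nhds, tendsto_const_nhds⟩

lemma lNormal2_eq_cN2 {D : Set (E × F)} (hD : Convex ℝ D) (z : E × F) :
    lNormal2 D z = cN2 D z := by
  refine le_antisymm ?_ (cN2_subset_lNormal2 D z)
  rintro v ⟨hz, zk, vk, hvk, hzk, hvkl⟩
  refine ⟨hz, fun z' hz' => ?_⟩
  have hcn : ∀ k, vk k ∈ cN2 D (zk k) := fun k => fNormal2_subset_cN2 hD _ (hvk k)
  have hev : ∀ k, (inner ℝ (vk k).1 (z'.1 - (zk k).1) : ℝ) +
      (inner ℝ (vk k).2 (z'.2 - (zk k).2) : ℝ) ≤ 0 := fun k => (hcn k).2 z' hz'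
  have h1 : Filter.Tendsto (fun k => (inner ℝ (vk k).1 (z'.1 - (zk k).1) : ℝ) +
      (inner ℝ (vk k).2 (z'.2 - (zk k).2) : ℝ)) Filter.atTop
      (𝓝 ((inner ℝ v.1 (z'.1 - z.1) : ℝ) + (inner ℝ v.2 (z'.2 - z.2) : ℝ))) := by
    apply Filter.Tendsto.add
    · exact Filter.Tendsto.inner ((continuous_fst.tendsto _).comp hvkl)
        (tendsto_const_nhds.sub ((continuous_fst.tendsto _).comp hzk))
    · exact Filter.Tendsto.inner ((continuous_snd.tendsto _).comp hvkl)
        (tendsto_const_nhds.sub ((continuous_snd.tendsto _).comp hzk))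
  exact le_of_tendsto h1 (Filter.Eventually.of_forall hev)

end AuxNormals
section AuxTan

variable {E F : Type*} [NormedAddCommGroup E] [InnerProductSpace ℝ E]
  [NormedAddCommGroup F] [InnerProductSpace ℝ F]

lemma gph_restr_scomp_convex {E P F : Type*} [NormedAddCommGroup E] [NormedSpace ℝ E]
    [NormedAddCommGroup P] [NormedSpace ℝ P] [NormedAddCommGroup F] [NormedSpace ℝ F]
    {S₁ : E → Set P} {S₂ : P → Set F} {X : Set E}
    (h₁ : Convex ℝ (gph (restr S₁ X))) (h₂ : Convex ℝ (gph S₂)) :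
    Convex ℝ (gph (restr (scomp S₂ S₁) X)) := by
  rintro ⟨x, u⟩ ⟨⟨w, hw, hu⟩, hxX⟩ ⟨x', u'⟩ ⟨⟨w', hw', hu'⟩, hxX'⟩ a b ha hb hab
  have hc₁ := h₁ (x := (x, w)) ⟨hw, hxX⟩ (y := (x', w')) ⟨hw', hxX'⟩ ha hb hab
  have hc₂ := h₂ (x := (w, u)) hu (y := (w', u')) hu' ha hb hab
  refine ⟨⟨a • w + b • w', ?_, ?_⟩, ?_⟩
  · exact hc₁.1
  · exact hc₂
  · exact hc₁.2

lemma zero_mem_tanCone {X : Set E} {x : E} (hx : x ∈ X) : (0 : E) ∈ tanCone X x := by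
  refine ⟨fun k => 1 / (k + 1), fun _ => 0, fun k => by positivity,
    tendsto_one_div_add_atTop_nhds_zero_nat, tendsto_const_nhds, fun k => by simpa using hx⟩

/-- In a convex set whose first components lie in `X`, differences of first components
are tangent to `X`. -/
lemma diff_mem_tanCone {D : Set (E × F)} (hD : Convex ℝ D)
    {X : Set E} (hDX : ∀ q ∈ D, q.1 ∈ X) {z z' : E × F} (hz : z ∈ D) (hz' : z' ∈ D) :
    z'.1 - z.1 ∈ tanCone X z.1 := by
  refine ⟨fun k => 1 / (k + 1), fun _ => z'.1 - z.1, fun k => by positivity,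
    tendsto_one_div_add_atTop_nhds_zero_nat, tendsto_const_nhds, fun k => ?_⟩
  set τ : ℝ := 1 / ((k : ℝ) + 1) with hτ
  have hτpos : 0 < τ := by positivity
  have hτ1 : τ ≤ 1 := by
    rw [hτ, div_le_one (by positivity)]
    linarith [Nat.cast_nonneg (α := ℝ) k]
  have h := hD hz hz' (a := 1 - τ) (b := τ) (by linarith) hτpos.le (by ring)
  have hmem := hDX _ h
  have : ((1 - τ) • z + τ • z').1 = z.1 + τ • (z'.1 - z.1) := by
    simp [Prod.smul_fst, Prod.fst_add, smul_sub, sub_smul]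
    abel
  rwa [this] at hmem

/-- Nearest-point projections onto a subspace are orthogonal. -/
lemma projSet_perp {K : Submodule ℝ E} {v y : E} (hy : y ∈ projSet (K : Set E) v) :
    ∀ c ∈ K, (inner ℝ (v - y) c : ℝ) = 0 := by
  obtain ⟨hyK, hnorm⟩ := hy
  intro c hc
  have key : ∀ lam : ℝ, ‖v - y‖ ≤ ‖v - y - lam • c‖ := by
    intro lam
    have hmem : y + lam • c ∈ (K : Set E) := K.add_mem hyK (K.smul_mem lam hc)
    have := Metric.infDist_le_dist_of_mem hmem (x := v)
    rw [dist_eq_norm] at this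
    have heq : v - (y + lam • c) = v - y - lam • c := by abel
    rw [heq] at this
    linarith [hnorm ▸ this]
  have key2 : ∀ lam : ℝ, 2 * lam * (inner ℝ (v - y) c : ℝ) ≤ lam ^ 2 * ‖c‖ ^ 2 := by
    intro lam
    have h1 := key lam
    have h2 : ‖v - y‖ ^ 2 ≤ ‖v - y - lam • c‖ ^ 2 := by
      apply pow_le_pow_left₀ (norm_nonneg _) h1
    have h3 : ‖v - y - lam • c‖ ^ 2 =
        ‖v - y‖ ^ 2 - 2 * (inner ℝ (v - y) (lam • c) : ℝ) + ‖lam • c‖ ^ 2 := by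
      rw [norm_sub_sq_real]
    rw [h3, real_inner_smul_right, norm_smul, mul_pow, Real.norm_eq_abs, sq_abs] at h2
    nlinarith
  by_contra hne
  set ip := (inner ℝ (v - y) c : ℝ) with hip
  have h5 : 0 < ip ^ 2 := lt_of_le_of_ne (sq_nonneg ip) (Ne.symm (pow_ne_zero 2 hne))
  have hcpos : (0:ℝ) < ‖c‖ ^ 2 + 1 := by positivity
  set tau : ℝ := 1 / (‖c‖ ^ 2 + 1) with htau
  have htaupos : 0 < tau := by positivity
  have htauid : tau * (‖c‖ ^ 2 + 1) = 1 := by rw [htau]; exact one_div_mul_cancel (ne_of_gt hcpos)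
  have h := key2 (ip * tau)
  nlinarith [h, h5, htaupos, htauid, mul_pos h5 htaupos, sq_nonneg (ip * tau),
    mul_pos (mul_pos h5 htaupos) htaupos]

lemma self_mem_projSet {K : Set E} {t : E} (ht : t ∈ K) : t ∈ projSet K t := by
  refine ⟨ht, ?_⟩
  rw [sub_self, norm_zero, Metric.infDist_zero_of_mem ht]

end AuxTan
section AuxManifold

open Function

lemma surj_nhds {n c : ℕ} {O : Set (Euc n)} {Φ' : Euc n → Euc n →L[ℝ] Euc c} {x₀ : Euc n}
    (hO : IsOpen O) (hx₀ : x₀ ∈ O) (hΦ' : ContinuousOn Φ' O)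
    (hs : Function.Surjective (Φ' x₀)) :
    ∃ U : Set (Euc n), IsOpen U ∧ x₀ ∈ U ∧ U ⊆ O ∧ ∀ x ∈ U, Function.Surjective (Φ' x) := by
  obtain ⟨g, hg⟩ := LinearMap.exists_rightInverse_of_surjective
    ((Φ' x₀ : Euc n →L[ℝ] Euc c) : Euc n →ₗ[ℝ] Euc c) (LinearMap.range_eq_top.2 hs)
  set B := LinearMap.toContinuousLinearMap g with hB
  have hcomp : Continuous fun A : Euc n →L[ℝ] Euc c => A.comp B :=
    (ContinuousLinearMap.isBoundedLinearMap_comp_right B).continuous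
  refine ⟨O ∩ (fun x => (Φ' x).comp B) ⁻¹' {T : Euc c →L[ℝ] Euc c | IsUnit T},
    ?_, ⟨hx₀, ?_⟩, inter_subset_left, ?_⟩
  · exact ContinuousOn.isOpen_inter_preimage (hcomp.comp_continuousOn hΦ') hO Units.isOpen
  · -- (Φ' x₀).comp B = 1
    have hid : (Φ' x₀).comp B = (1 : Euc c →L[ℝ] Euc c) := by
      apply ContinuousLinearMap.ext
      intro y
      simp only [ContinuousLinearMap.comp_apply, ContinuousLinearMap.one_apply]
      exact LinearMap.ext_iff.1 hg y
    simp only [Set.mem_preimage, Set.mem_setOf_eq, hid]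
    exact isUnit_one
  · rintro x ⟨-, hx⟩
    obtain ⟨u, hu⟩ := hx
    change (↑u : Euc c →L[ℝ] Euc c) = (Φ' x).comp B at hu
    intro y
    refine ⟨B ((↑u⁻¹ : Euc c →L[ℝ] Euc c) y), ?_⟩
    have h1 : Φ' x (B ((↑u⁻¹ : Euc c →L[ℝ] Euc c) y)) =
        ((Φ' x).comp B) ((↑u⁻¹ : Euc c →L[ℝ] Euc c) y) := rfl
    rw [h1, ← hu, ← ContinuousLinearMap.mul_apply, u.mul_inv,
      ContinuousLinearMap.one_apply]

lemma tanCone_eq_ker {n c : ℕ} {X O : Set (Euc n)} {Φ : Euc n → Euc c}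
    {Φ' : Euc n → Euc n →L[ℝ] Euc c}
    (hO : IsOpen O) (hchar : X ∩ O = {x | x ∈ O ∧ Φ x = 0})
    (hder : ∀ x ∈ O, HasFDerivAt Φ (Φ' x) x) (hcont : ContinuousOn Φ' O)
    {x : Euc n} (hxX : x ∈ X) (hxO : x ∈ O) (hsurj : Function.Surjective (Φ' x)) :
    tanCone X x = ((Φ' x).ker : Set (Euc n)) := by
  have hΦ0 : ∀ {y : Euc n}, y ∈ X → y ∈ O → Φ y = 0 := by
    intro y h1 h2
    have : y ∈ X ∩ O := ⟨h1, h2⟩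
    rw [hchar] at this
    exact this.2
  apply le_antisymm
  · -- tangent cone ⊆ kernel
    rintro w ⟨t, w', htpos, ht0, hw', hmem⟩
    simp only [SetLike.mem_coe, LinearMap.mem_ker]
    set yk : ℕ → Euc n := fun k => x + t k • w' k with hyk
    have hylim : Tendsto yk atTop (𝓝 x) := by
      have h1 : Tendsto (fun k => t k • w' k) atTop (𝓝 ((0:ℝ) • w)) := ht0.smul hw'
      rw [zero_smul] at h1
      simpa using tendsto_const_nhds.add h1
    have hyO : ∀ᶠ k in atTop, yk k ∈ O := hylim.eventually (hO.eventually_mem hxO)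
    have hyΦ : ∀ᶠ k in atTop, Φ (yk k) = 0 := by
      filter_upwards [hyO] with k hk
      exact hΦ0 (hmem k) hk
    have hwb : ∀ᶠ k in atTop, ‖w' k‖ ≤ ‖w‖ + 1 := by
      have h := Filter.Tendsto.eventually_lt_const (lt_add_one ‖w‖) hw'.norm
      exact h.mono fun k hk => hk.le
    have hx0 : Φ x = 0 := hΦ0 hxX hxO
    have key : Tendsto (fun k => Φ' x (w' k)) atTop (𝓝 0) := by
      rw [NormedAddCommGroup.tendsto_nhds_zero]
      intro ε hε
      have hε' : 0 < ε / (2 * (‖w‖ + 1)) := by positivity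
      have hlo := (hder x hxO).isLittleO.def hε'
      have hev := hylim.eventually hlo
      filter_upwards [hev, hyΦ, hwb] with k h1 h2 h3
      rw [hyk] at h1
      simp only [add_sub_cancel_left, h2, hx0, sub_self, zero_sub, norm_neg, map_smul] at h1
      simp only [show Φ (x + t k • w' k) = 0 from h2, sub_zero, zero_sub, norm_neg] at h1
      rw [norm_smul, norm_smul, Real.norm_eq_abs, abs_of_pos (htpos k)] at h1
      have h4 : ‖Φ' x (w' k)‖ ≤ ε / (2 * (‖w‖ + 1)) * ‖w' k‖ :=
        (mul_le_mul_iff_right₀ (htpos k)).mp (by linarith [h1])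
      have h5 : ε / (2 * (‖w‖ + 1)) * ‖w' k‖ ≤ ε / (2 * (‖w‖ + 1)) * (‖w‖ + 1) := by
        apply mul_le_mul_of_nonneg_left h3 (le_of_lt hε')
      have h6 : ε / (2 * (‖w‖ + 1)) * (‖w‖ + 1) = ε / 2 := by
        field_simp
      calc ‖Φ' x (w' k)‖ ≤ ε / 2 := by linarith
        _ < ε := by linarith
    have key2 : Tendsto (fun k => Φ' x (w' k)) atTop (𝓝 (Φ' x w)) :=
      ((Φ' x).continuous.tendsto w).comp hw'
    exact tendsto_nhds_unique key2 key
  · -- kernel ⊆ tangent cone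
    intro h hh
    have hh' : h ∈ (Φ' x).ker := hh
    have hstrict : HasStrictFDerivAt Φ (Φ' x) x := by
      apply hasStrictFDerivAt_of_hasFDerivAt_of_continuousAt
      · filter_upwards [hO.eventually_mem hxO] with y hy using hder y hy
      · exact hcont.continuousAt (hO.mem_nhds hxO)
    have hrange : (Φ' x).range = ⊤ := LinearMap.range_eq_top.2 hsurj
    set hb : (Φ' x).ker := ⟨h, hh'⟩ with hhb
    set γ : ℝ → Euc n :=
      fun s => hstrict.implicitFunction Φ (Φ' x) hrange (Φ x) (s • hb) with hγ
    have hγ0 : γ 0 = x := by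
      rw [hγ]
      simp only [zero_smul]
      exact hstrict.implicitFunction_apply_image hrange
    have hd : HasDerivAt γ h 0 := by
      have h1 := hstrict.to_implicitFunction hrange
      have h0 : (0 : (Φ' x).ker) = (0:ℝ) • hb := by rw [zero_smul]
      rw [h0] at h1
      have h2 : HasDerivAt (fun s : ℝ => s • hb) hb 0 := by
        simpa using (hasDerivAt_id (0:ℝ)).smul_const hb
      have h3 := h1.hasFDerivAt.comp_hasDerivAt 0 h2
      have h4 : ((Φ' x).ker).subtypeL hb = h := rfl
      rw [h4] at h3
      exact h3
    have hXev : ∀ᶠ s in 𝓝 (0:ℝ), γ s ∈ X := by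
      have hev1 := hstrict.map_implicitFunction_eq hrange
      have ht : Tendsto (fun s : ℝ => (Φ x, s • hb)) (𝓝 0)
          (𝓝 (Φ x, (0 : (Φ' x).ker))) := by
        apply Filter.Tendsto.prodMk_nhds tendsto_const_nhds
        have : Tendsto (fun s : ℝ => s • hb) (𝓝 0) (𝓝 ((0:ℝ) • hb)) :=
          (continuous_id.smul continuous_const).tendsto 0
        rwa [zero_smul] at this
      have hev2 : ∀ᶠ s in 𝓝 (0:ℝ), Φ (γ s) = Φ x := ht.eventually hev1
      have hev3 : ∀ᶠ s in 𝓝 (0:ℝ), γ s ∈ O := by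
        have : ContinuousAt γ 0 := hd.continuousAt
        apply this.eventually_mem
        rw [hγ0]
        exact hO.mem_nhds hxO
      filter_upwards [hev2, hev3] with s h1 h2
      have hx0 : Φ x = 0 := hΦ0 hxX hxO
      have : γ s ∈ X ∩ O := by
        rw [hchar]
        exact ⟨h2, by rw [h1, hx0]⟩
      exact this.1
    rw [Metric.eventually_nhds_iff] at hXev
    obtain ⟨δ, hδpos, hball⟩ := hXev
    set tseq : ℕ → ℝ := fun k => δ / 2 * (((k:ℝ) + 1))⁻¹ with htseq
    have htpos : ∀ k, 0 < tseq k := fun k => by positivity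
    have htlim : Tendsto tseq atTop (𝓝 0) := by
      have := (tendsto_one_div_add_atTop_nhds_zero_nat (𝕜 := ℝ)).const_mul (δ / 2)
      simpa using this
    have htdist : ∀ k, dist (tseq k) 0 < δ := by
      intro k
      rw [Real.dist_eq, sub_zero, abs_of_pos (htpos k)]
      have h1 : ((k:ℝ) + 1)⁻¹ ≤ 1 := by
        rw [← one_div, div_le_one (by positivity)]
        linarith [Nat.cast_nonneg (α := ℝ) k]
      calc tseq k ≤ δ / 2 * 1 := by
            apply mul_le_mul_of_nonneg_left h1 (by positivity)
        _ < δ := by linarith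
    set wseq : ℕ → Euc n := fun k => (tseq k)⁻¹ • (γ (tseq k) - x) with hwseq
    refine ⟨tseq, wseq, htpos, htlim, ?_, ?_⟩
    · -- wseq → h via slope
      have hslope := hasDerivAt_iff_tendsto_slope.1 hd
      have htt : Tendsto tseq atTop (𝓝[≠] (0:ℝ)) := by
        apply tendsto_nhdsWithin_of_tendsto_nhds_of_eventually_within _ htlim
        exact Filter.Eventually.of_forall fun k => ne_of_gt (htpos k)
      have hcmp := hslope.comp htt
      have heq : (slope γ 0 ∘ tseq) = wseq := by
        funext k
        rw [Function.comp_apply, slope_def_module, hγ0, sub_zero, hwseq]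
      rwa [heq] at hcmp
    · intro k
      have : x + tseq k • wseq k = γ (tseq k) := by
        rw [hwseq]
        simp only [smul_inv_smul₀ (ne_of_gt (htpos k))]
        abel
      rw [this]
      exact hball (htdist k)

end AuxManifold
section AuxProjChar

lemma mem_gph_restr {E F : Type*} {S : E → Set F} {X : Set E} {z : E × F} :
    z ∈ gph (restr S X) ↔ z.2 ∈ S z.1 ∧ z.1 ∈ X := Iff.rfl

lemma projCoderiv_char {n q c : ℕ} {S : Euc n → Set (Euc q)} {X : Set (Euc n)}
    {U O : Set (Euc n)} {Φ' : Euc n → Euc n →L[ℝ] Euc c}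
    (hG : Convex ℝ (gph (restr S X)))
    {xb : Euc n} {ub : Euc q} (hzb : (xb, ub) ∈ gph (restr S X))
    (hUo : IsOpen U) (hxU : xb ∈ U) (hUO : U ⊆ O) (hOo : IsOpen O)
    (hΦ'c : ContinuousOn Φ' O)
    (hker : ∀ x ∈ X ∩ U, tanCone X x = ((Φ' x).ker : Set (Euc n)))
    (u' : Euc q) :
    projCoderiv S X xb ub u' =
      {t | t ∈ tanCone X xb ∧ (t, -u') ∈ cN2 (gph (restr S X)) (xb, ub)} := by
  have hGX : ∀ z ∈ gph (restr S X), z.1 ∈ X := fun z hz => hz.2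
  have hxbX : xb ∈ X := hzb.2
  apply le_antisymm
  · rintro t ⟨zk, qk, hzkG, hqk, hzkl, hqkl⟩
    have hx1 : Tendsto (fun k => (zk k).1) atTop (𝓝 xb) :=
      (continuous_fst.tendsto _).comp hzkl
    have hq1l : Tendsto (fun k => (qk k).1) atTop (𝓝 t) :=
      (continuous_fst.tendsto _).comp hqkl
    have hevU : ∀ᶠ k in atTop, (zk k).1 ∈ U := hx1.eventually (hUo.eventually_mem hxU)
    have habs : ∀ᶠ k in atTop, (qk k) ∈ cN2 (gph (restr S X)) (zk k) ∧
        (qk k).1 ∈ (Φ' ((zk k).1)).ker := by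
      filter_upwards [hevU] with k hkU
      obtain ⟨v, hvN, hproj⟩ := hqk k
      have hxX : (zk k).1 ∈ X := (hzkG k).2
      have hT := hker _ ⟨hxX, hkU⟩
      rw [hT] at hproj
      have hperp := projSet_perp hproj
      have hq1K : (qk k).1 ∈ (Φ' ((zk k).1)).ker := hproj.1
      have hvc : (v, (qk k).2) ∈ cN2 (gph (restr S X)) (zk k) := by
        rw [← lNormal2_eq_cN2 hG]; exact hvN
      refine ⟨⟨hvc.1, fun z' hz' => ?_⟩, hq1K⟩
      have hdiff : z'.1 - (zk k).1 ∈ tanCone X (zk k).1 :=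
        diff_mem_tanCone hG hGX (hzkG k) hz'
      rw [hT] at hdiff
      have h0 := hperp _ hdiff
      rw [inner_sub_left] at h0
      have hveq : (inner ℝ (qk k).1 (z'.1 - (zk k).1) : ℝ) =
          (inner ℝ v (z'.1 - (zk k).1) : ℝ) := by linarith
      have := hvc.2 z' hz'
      calc (inner ℝ (qk k).1 (z'.1 - (zk k).1) : ℝ) + (inner ℝ (qk k).2 (z'.2 - (zk k).2) : ℝ)
          = (inner ℝ v (z'.1 - (zk k).1) : ℝ) + (inner ℝ (qk k).2 (z'.2 - (zk k).2) : ℝ) := by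
            rw [hveq]
        _ ≤ 0 := this
    obtain ⟨N, hN⟩ := Filter.eventually_atTop.1 habs
    constructor
    · -- t is in the tangent cone at xb
      have hΦcont : ContinuousAt Φ' xb := hΦ'c.continuousAt (hOo.mem_nhds (hUO hxU))
      have hA : Tendsto (fun k => Φ' ((zk k).1)) atTop (𝓝 (Φ' xb)) :=
        hΦcont.tendsto.comp hx1
      have happ : Tendsto (fun k => (Φ' ((zk k).1)) ((qk k).1)) atTop (𝓝 (Φ' xb t)) :=
        (isBoundedBilinearMap_apply.continuous.tendsto _).comp (hA.prodMk_nhds hq1l)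
      have hzero : ∀ᶠ k in atTop, (Φ' ((zk k).1)) ((qk k).1) = 0 :=
        habs.mono fun k hk => LinearMap.mem_ker.1 hk.2
      have ht0 : Φ' xb t = 0 :=
        tendsto_nhds_unique happ (tendsto_const_nhds.congr' (hzero.mono fun k hk => hk.symm))
      rw [hker xb ⟨hxbX, hxU⟩]
      exact LinearMap.mem_ker.2 ht0
    · have hmemN : (t, -u') ∈ lNormal2 (gph (restr S X)) (xb, ub) := by
        refine ⟨hzb, fun k => zk (k + N), fun k => qk (k + N),
          fun k => cN2_subset_fNormal2 _ _ (hN _ le_add_self).1, ?_, ?_⟩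
        · exact hzkl.comp (tendsto_add_atTop_nat N)
        · exact hqkl.comp (tendsto_add_atTop_nat N)
      rw [lNormal2_eq_cN2 hG] at hmemN
      exact hmemN
  · rintro t ⟨htT, htN⟩
    exact ⟨fun _ => (xb, ub), fun _ => (t, -u'), fun _ => hzb,
      fun _ => ⟨t, cN2_subset_lNormal2 _ _ htN, self_mem_projSet htT⟩,
      tendsto_const_nhds, tendsto_const_nhds⟩

end AuxProjChar
section AuxSep

lemma sep_point {V : Type*} [NormedAddCommGroup V] [NormedSpace ℝ V] [FiniteDimensional ℝ V]
    {C : Set V} (hC : Convex ℝ C) (hne : C.Nonempty) (h0 : (0:V) ∉ C) :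
    ∃ f : V →L[ℝ] ℝ, f ≠ 0 ∧ ∀ c ∈ C, 0 ≤ f c := by
  by_cases hcl : (0:V) ∈ closure C
  · by_cases hint : (interior (closure C)).Nonempty
    · -- full-dimensional case
      have hCcl : Convex ℝ (closure C) := hC.closure
      have hspan : affineSpan ℝ (closure C) = ⊤ :=
        (hCcl.interior_nonempty_iff_affineSpan_eq_top).1 hint
      have hspanC : affineSpan ℝ C = ⊤ := by
        apply top_unique
        rw [← hspan]
        apply affineSpan_le.2
        refine closure_minimal (subset_affineSpan ℝ C) ?_
        exact (affineSpan ℝ C).closed_of_finiteDimensional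
      have hintC : (interior C).Nonempty := hC.interior_nonempty_iff_affineSpan_eq_top.2 hspanC
      obtain ⟨z, hz⟩ := hintC
      have h0i : (0:V) ∉ interior (closure C) := by
        intro h0i
        rw [mem_interior_iff_mem_nhds, Metric.mem_nhds_iff] at h0i
        obtain ⟨ε, hε, hball⟩ := h0i
        set δ : ℝ := ε / (2 * (‖z‖ + 1)) with hδdef
        have hδ : 0 < δ := by positivity
        have hy : -(δ • z) ∈ closure C := by
          apply hball
          rw [Metric.mem_ball, dist_zero_right, norm_neg, norm_smul, Real.norm_eq_abs,
            abs_of_pos hδ, hδdef]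
          rw [div_mul_eq_mul_div, div_lt_iff₀ (by positivity)]
          nlinarith [norm_nonneg z, hε]
        have hseg := hC.openSegment_interior_closure_subset_interior hz hy
        apply h0
        have h0seg : (0:V) ∈ openSegment ℝ z (-(δ • z)) := by
          refine ⟨δ / (1 + δ), 1 / (1 + δ), by positivity, by positivity, ?_, ?_⟩
          · field_simp
            ring
          · rw [smul_neg, smul_smul, one_div_mul_eq_div, ← sub_eq_add_neg, ← sub_smul,
              sub_self, zero_smul]
        exact interior_subset (hseg h0seg)
      obtain ⟨f, u, hfa, hfb⟩ := geometric_hahn_banach_open hCcl.interior isOpen_interior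
        (convex_singleton (0:V)) (Set.disjoint_singleton_right.2 h0i)
      have hu0 : u ≤ 0 := by simpa using hfb 0 rfl
      obtain ⟨a₀, ha₀⟩ := hint
      have hfne : f ≠ 0 := by
        intro hf0
        rw [hf0] at hfa
        have h1 := hfa a₀ ha₀
        simp at h1
        linarith
      refine ⟨-f, neg_ne_zero.2 hfne, fun cc hcc => ?_⟩
      have key : ∀ j : ℕ, f ((((j:ℝ)+1)⁻¹) • a₀ + ((1:ℝ) - ((j:ℝ)+1)⁻¹) • cc) ≤ 0 := by
        intro j
        have h1 : ((j:ℝ)+1)⁻¹ ≤ 1 := by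
          rw [← one_div, div_le_one (by positivity)]
          linarith [Nat.cast_nonneg (α := ℝ) j]
        have hmem : (((j:ℝ)+1)⁻¹) • a₀ + ((1:ℝ) - ((j:ℝ)+1)⁻¹) • cc ∈ interior (closure C) :=
          hCcl.combo_interior_closure_mem_interior ha₀
            (by rw [closure_closure]; exact subset_closure hcc) (by positivity)
            (by linarith) (by ring)
        exact le_trans (le_of_lt (hfa _ hmem)) hu0
      have hlim : Tendsto (fun j : ℕ => (((j:ℝ)+1)⁻¹) • a₀ + ((1:ℝ) - ((j:ℝ)+1)⁻¹) • cc)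
          atTop (𝓝 cc) := by
        have h1 : Tendsto (fun j : ℕ => ((j:ℝ)+1)⁻¹) atTop (𝓝 0) := by
          simpa using tendsto_one_div_add_atTop_nhds_zero_nat (𝕜 := ℝ)
        have h2 := (h1.smul_const a₀).add
          (((tendsto_const_nhds (x := (1:ℝ))).sub h1).smul_const cc)
        simpa using h2
      have hfc : f cc ≤ 0 :=
        le_of_tendsto ((f.continuous.tendsto cc).comp hlim) (Filter.Eventually.of_forall key)
      simpa using neg_nonneg.2 hfc
    · -- low-dimensional case
      have hspan : affineSpan ℝ C ≠ ⊤ := by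
        intro htop
        apply hint
        rw [hC.closure.interior_nonempty_iff_affineSpan_eq_top]
        apply top_unique
        rw [← htop]
        exact affineSpan_mono ℝ subset_closure
      have h0span : (0:V) ∈ affineSpan ℝ C := by
        have hclosed : IsClosed (affineSpan ℝ C : Set V) :=
          (affineSpan ℝ C).closed_of_finiteDimensional
        exact closure_minimal (subset_affineSpan ℝ C) hclosed hcl
      set W := (affineSpan ℝ C).direction with hW
      have hCW : ∀ cc ∈ C, cc ∈ W := by
        intro cc hcc
        have h1 := AffineSubspace.vsub_mem_direction (subset_affineSpan ℝ C hcc) h0span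
        simpa using h1
      have hWne : W ≠ ⊤ := by
        intro hWtop
        apply hspan
        rw [eq_top_iff]
        intro v _
        have hvW : v ∈ W := hWtop ▸ Submodule.mem_top
        have h1 := AffineSubspace.vadd_mem_of_mem_direction hvW h0span
        simpa using h1
      obtain ⟨x₀, hx₀⟩ : ∃ x₀, x₀ ∉ W := by
        by_contra hc
        push_neg at hc
        exact hWne (Submodule.eq_top_iff'.2 hc)
      have hWclosed : IsClosed (W : Set V) := W.closed_of_finiteDimensional
      obtain ⟨f, u, hfx, hfb⟩ := geometric_hahn_banach_point_closed W.convex hWclosed hx₀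
      have hfW : ∀ w ∈ W, f w = 0 := by
        intro w hw
        by_contra hne
        have h1 := hfb _ (W.smul_mem ((u - 1)/ f w) hw)
        rw [map_smul, smul_eq_mul, div_mul_cancel₀ _ hne] at h1
        linarith
      have hu0 : u < 0 := by simpa using hfb 0 W.zero_mem
      have hfne : f ≠ 0 := by
        intro h
        rw [h] at hfx
        simp at hfx
        linarith
      exact ⟨f, hfne, fun cc hcc => le_of_eq (hfW cc (hCW cc hcc)).symm⟩
  · obtain ⟨f, u, hf0, hfb⟩ := geometric_hahn_banach_point_closed hC.closure isClosed_closure hcl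
    have h0u : 0 < u := by simpa using hf0
    obtain ⟨c₀, hc₀⟩ := hne
    have hfne : f ≠ 0 := by
      intro h
      have h1 := hfb c₀ (subset_closure hc₀)
      rw [h] at h1
      simp at h1
      linarith
    exact ⟨f, hfne, fun cc hcc => le_of_lt (lt_trans h0u (hfb cc (subset_closure hcc)))⟩

end AuxSep
section AuxChainSep

open scoped Pointwise

lemma combo_sub {V : Type*} [AddCommGroup V] [Module ℝ V]
    {a b : ℝ} (hab : a + b = 1) (x y z : V) :
    a • x + b • y - z = a • (x - z) + b • (y - z) := by
  have h : a • z + b • z = z := by rw [← add_smul, hab, one_smul]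
  calc a • x + b • y - z = a • x + b • y - (a • z + b • z) := by rw [h]
    _ = a • (x - z) + b • (y - z) := by rw [smul_sub, smul_sub]; abel

lemma inner_combo {V : Type*} [NormedAddCommGroup V] [InnerProductSpace ℝ V]
    {a b : ℝ} (hab : a + b = 1) (t x y z : V) :
    (inner ℝ t (a • x + b • y - z) : ℝ) =
      a * (inner ℝ t (x - z) : ℝ) + b * (inner ℝ t (y - z) : ℝ) := by
  rw [combo_sub hab, inner_add_right, real_inner_smul_right, real_inner_smul_right]

lemma chain_sep {n p m : ℕ} {S₁ : Euc n → Set (Euc p)} {S₂ : Euc p → Set (Euc m)}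
    {X : Set (Euc n)} {xb : Euc n} {wb : Euc p} {ub : Euc m}
    (h₁ : (xb, wb) ∈ gph (restr S₁ X)) (h₂ : (wb, ub) ∈ gph S₂)
    {t : Euc n} {us : Euc m}
    (hball : ∀ z' ∈ gph (restr (scomp S₂ S₁) X),
      (inner ℝ t (z'.1 - xb) : ℝ) + (inner ℝ (-us) (z'.2 - ub) : ℝ) ≤ 0)
    (hcvx₁ : Convex ℝ (gph (restr S₁ X))) (hcvx₂ : Convex ℝ (gph S₂)) :
    (∃ ws : Euc p,
        (∀ z' ∈ gph S₂, (inner ℝ ws (z'.1 - wb) : ℝ) + (inner ℝ (-us) (z'.2 - ub) : ℝ) ≤ 0) ∧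
        (∀ z' ∈ gph (restr S₁ X),
          (inner ℝ t (z'.1 - xb) : ℝ) + (inner ℝ (-ws) (z'.2 - wb) : ℝ) ≤ 0)) ∨
    (∃ ξ : Euc p, ξ ≠ 0 ∧
        (∀ z' ∈ gph S₂, (inner ℝ ξ (z'.1 - wb) : ℝ) ≤ 0) ∧
        (∀ z' ∈ gph (restr S₁ X), 0 ≤ (inner ℝ ξ (z'.2 - wb) : ℝ))) := by
  classical
  set A : Set (Euc p × ℝ) :=
    {q | ∃ x : Euc n, (x, q.1) ∈ gph (restr S₁ X) ∧ q.2 < (inner ℝ t (x - xb) : ℝ)} with hA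
  set B : Set (Euc p × ℝ) :=
    {q | ∃ u : Euc m, (q.1, u) ∈ gph S₂ ∧ (inner ℝ us (u - ub) : ℝ) ≤ q.2} with hB
  have hAconv : Convex ℝ A := by
    rintro ⟨w1, r1⟩ ⟨x1, hx1, hr1⟩ ⟨w2, r2⟩ ⟨x2, hx2, hr2⟩ a b ha hb hab
    refine ⟨a • x1 + b • x2, ?_, ?_⟩
    · exact hcvx₁ hx1 hx2 ha hb hab
    · show a * r1 + b * r2 < (inner ℝ t (a • x1 + b • x2 - xb) : ℝ)
      rw [inner_combo hab]
      rcases eq_or_lt_of_le ha with ha0 | hapos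
      · have hb1 : b = 1 := by linarith
        rw [← ha0, hb1]
        simpa using hr2
      · have h1 : a * r1 < a * (inner ℝ t (x1 - xb) : ℝ) :=
          mul_lt_mul_of_pos_left hr1 hapos
        have h2 : b * r2 ≤ b * (inner ℝ t (x2 - xb) : ℝ) :=
          mul_le_mul_of_nonneg_left hr2.le hb
        linarith
  have hBconv : Convex ℝ B := by
    rintro ⟨w1, r1⟩ ⟨u1, hu1, hr1⟩ ⟨w2, r2⟩ ⟨u2, hu2, hr2⟩ a b ha hb hab
    refine ⟨a • u1 + b • u2, ?_, ?_⟩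
    · exact hcvx₂ hu1 hu2 ha hb hab
    · show (inner ℝ us (a • u1 + b • u2 - ub) : ℝ) ≤ a * r1 + b * r2
      rw [inner_combo hab]
      have h1 : a * (inner ℝ us (u1 - ub) : ℝ) ≤ a * r1 := mul_le_mul_of_nonneg_left hr1 ha
      have h2 : b * (inner ℝ us (u2 - ub) : ℝ) ≤ b * r2 := mul_le_mul_of_nonneg_left hr2 hb
      linarith
  have hAne : A.Nonempty := ⟨(wb, -1), xb, h₁, by simp⟩
  have hBne : B.Nonempty := ⟨(wb, 0), ub, h₂, by simp⟩
  have hdisj : ∀ q : Euc p × ℝ, q ∈ A → q ∈ B → False := by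
    rintro q ⟨x, hx1, hx2⟩ ⟨u, hu1, hu2⟩
    have hmem : ((x, u) : Euc n × Euc m) ∈ gph (restr (scomp S₂ S₁) X) :=
      ⟨⟨q.1, hx1.1, hu1⟩, hx1.2⟩
    have h3 := hball _ hmem
    rw [inner_neg_left] at h3
    simp only at h3
    linarith
  have h0C : (0 : Euc p × ℝ) ∉ A - B := by
    intro h0
    rw [Set.mem_sub] at h0
    obtain ⟨qa, hqa, qb, hqb, hab⟩ := h0
    have : qa = qb := by rwa [sub_eq_zero] at hab
    exact hdisj qa hqa (this ▸ hqb)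
  obtain ⟨f, hfne, hfpos⟩ := sep_point (hAconv.sub hBconv)
    ⟨hAne.some - hBne.some, Set.sub_mem_sub hAne.some_mem hBne.some_mem⟩ h0C
  have hfAB : ∀ a ∈ A, ∀ b ∈ B, f b ≤ f a := by
    intro qa hqa qb hqb
    have h1 := hfpos _ (Set.sub_mem_sub hqa hqb)
    rw [map_sub] at h1
    linarith
  set g : Euc p →L[ℝ] ℝ := f.comp (ContinuousLinearMap.inl ℝ (Euc p) ℝ) with hg
  set α : ℝ := f (0, 1) with hα
  have hsplit : ∀ (w : Euc p) (r : ℝ), f (w, r) = g w + r * α := by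
    intro w r
    have h1 : ((w, r) : Euc p × ℝ) = (w, 0) + r • ((0 : Euc p), (1:ℝ)) := by
      simp [Prod.ext_iff]
    rw [h1, map_add, map_smul]
    simp [hg, hα, smul_eq_mul]
  have hbB0 : ((wb, 0) : Euc p × ℝ) ∈ B := ⟨ub, h₂, by simp⟩
  have hαle : α ≤ 0 := by
    have hrA : ((wb, -1) : Euc p × ℝ) ∈ A := ⟨xb, h₁, by simp⟩
    have h1 := hfAB _ hrA _ hbB0
    rw [hsplit, hsplit] at h1
    -- g wb + 0 * α ≤ g wb + (-1) * α
    linarith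
  have hG1 : ∀ z' ∈ gph (restr S₁ X),
      g wb ≤ g z'.2 + (inner ℝ t (z'.1 - xb) : ℝ) * α := by
    intro z' hz'
    set R : ℝ := (inner ℝ t (z'.1 - xb) : ℝ) with hR
    have hseq : ∀ j : ℕ, g wb ≤ g z'.2 + (R - ((j:ℝ)+1)⁻¹) * α := by
      intro j
      have hpos : (0:ℝ) < ((j:ℝ)+1)⁻¹ := by positivity
      have hrA : ((z'.2, R - ((j:ℝ)+1)⁻¹) : Euc p × ℝ) ∈ A :=
        ⟨z'.1, hz', by rw [← hR]; linarith⟩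
      have h1 := hfAB _ hrA _ hbB0
      rw [hsplit, hsplit] at h1
      linarith
    have hlim : Tendsto (fun j : ℕ => g z'.2 + (R - ((j:ℝ)+1)⁻¹) * α) atTop
        (𝓝 (g z'.2 + R * α)) := by
      have h1 : Tendsto (fun j : ℕ => ((j:ℝ)+1)⁻¹) atTop (𝓝 0) := by
        simpa using tendsto_one_div_add_atTop_nhds_zero_nat (𝕜 := ℝ)
      have h2 := (((tendsto_const_nhds (x := R)).sub h1).mul_const α).const_add (g z'.2)
      simpa using h2
    exact ge_of_tendsto hlim (Filter.Eventually.of_forall hseq)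
  have hG2 : ∀ z' ∈ gph S₂,
      g z'.1 + (inner ℝ us (z'.2 - ub) : ℝ) * α ≤ g wb := by
    intro z' hz'
    set I : ℝ := (inner ℝ us (z'.2 - ub) : ℝ) with hI
    have hseq : ∀ j : ℕ, g z'.1 + I * α ≤ g wb + (-(((j:ℝ)+1)⁻¹)) * α := by
      intro j
      have hpos : (0:ℝ) < ((j:ℝ)+1)⁻¹ := by positivity
      have hrA : ((wb, -(((j:ℝ)+1)⁻¹)) : Euc p × ℝ) ∈ A := ⟨xb, h₁, by simp; linarith⟩
      have hbB : ((z'.1, I) : Euc p × ℝ) ∈ B := ⟨z'.2, hz', by rw [← hI]⟩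
      have h1 := hfAB _ hrA _ hbB
      rw [hsplit, hsplit] at h1
      linarith
    have hlim : Tendsto (fun j : ℕ => g wb + (-(((j:ℝ)+1)⁻¹)) * α) atTop
        (𝓝 (g wb + 0)) := by
      have h1 : Tendsto (fun j : ℕ => ((j:ℝ)+1)⁻¹) atTop (𝓝 0) := by
        simpa using tendsto_one_div_add_atTop_nhds_zero_nat (𝕜 := ℝ)
      have h2 := ((h1.neg.mul_const α)).const_add (g wb)
      simpa using h2
    have := ge_of_tendsto hlim (Filter.Eventually.of_forall hseq)
    simpa using this
  rcases lt_or_eq_of_le hαle with hneg | heq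
  · -- α < 0 : nondegenerate separation
    left
    set β : ℝ := (-α)⁻¹ with hβdef
    have hβ : 0 < β := by rw [hβdef]; exact inv_pos.2 (neg_pos.2 hneg)
    have hβα : β * α = -1 := by
      have hα0 : α ≠ 0 := ne_of_lt hneg
      rw [hβdef]
      field_simp
    set ws : Euc p := (InnerProductSpace.toDual ℝ (Euc p)).symm (β • g) with hws
    have hwsip : ∀ y : Euc p, (inner ℝ ws y : ℝ) = β * g y := by
      intro y
      rw [hws, InnerProductSpace.toDual_symm_apply]
      simp [smul_eq_mul]
    refine ⟨ws, ?_, ?_⟩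
    · intro z' hz'
      have h1 := hG2 z' hz'
      rw [hwsip, map_sub, inner_neg_left]
      have hm := mul_le_mul_of_nonneg_left h1 hβ.le
      have hexp : β * (g z'.1 + (inner ℝ us (z'.2 - ub) : ℝ) * α)
          = β * g z'.1 + (β * α) * (inner ℝ us (z'.2 - ub) : ℝ) := by ring
      rw [hexp, hβα] at hm
      linarith
    · intro z' hz'
      have h1 := hG1 z' hz'
      rw [inner_neg_left, hwsip, map_sub]
      have hm := mul_le_mul_of_nonneg_left h1 hβ.le
      have hexp : β * (g z'.2 + (inner ℝ t (z'.1 - xb) : ℝ) * α)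
          = β * g z'.2 + (β * α) * (inner ℝ t (z'.1 - xb) : ℝ) := by ring
      rw [hexp, hβα] at hm
      linarith
  · -- α = 0 : degenerate separation
    right
    have hgne : g ≠ 0 := by
      intro hg0
      apply hfne
      apply ContinuousLinearMap.ext
      rintro ⟨w, r⟩
      rw [hsplit w r, hg0, heq]
      simp
    set ξ : Euc p := (InnerProductSpace.toDual ℝ (Euc p)).symm g with hξ
    have hξip : ∀ y : Euc p, (inner ℝ ξ y : ℝ) = g y := by
      intro y
      rw [hξ, InnerProductSpace.toDual_symm_apply]
    have hξne : ξ ≠ 0 := by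
      intro h
      apply hgne
      apply ContinuousLinearMap.ext
      intro y
      have := hξip y
      rw [h, inner_zero_left] at this
      simp [← this]
    refine ⟨ξ, hξne, ?_, ?_⟩
    · intro z' hz'
      have h1 := hG2 z' hz'
      rw [heq, mul_zero, add_zero] at h1
      rw [hξip, map_sub]
      linarith
    · intro z' hz'
      have h1 := hG1 z' hz'
      rw [heq, mul_zero, add_zero] at h1
      rw [hξip, map_sub]
      linarith

end AuxChainSep
/-- Chain rule equality: if additionally `S₁|_X` and `S₂` are
graph-convex and `X` is a smooth manifold around `xb`, then `(S₂∘S₁)|_X` is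
graph-convex and
`D*_X (S₂∘S₁)(xb|ub) = D*_X S₁(xb|wb) ∘ D*S₂(wb|ub)` for every
`wb ∈ S₁|_X(xb) ∩ S₂⁻¹(ub)`. -/
theorem stmt16 {n p m : ℕ} (S₁ : Euc n → Set (Euc p)) (S₂ : Euc p → Set (Euc m))
    (X : Set (Euc n)) (hXcl : IsClosed X)
    (h₁osc : OscRel S₁ X) (h₂osc : OscRel S₂ (univ : Set (Euc p)))
    (xb : Euc n) (ub : Euc m) (hmem : (xb, ub) ∈ gph (restr (scomp S₂ S₁) X))
    (hbdd : ∃ δ > 0, ∃ R : ℝ, ∀ x ∈ X, ∀ u : Euc m, ‖x - xb‖ < δ → ‖u - ub‖ < δ →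
      ∀ w : Euc p, w ∈ S₁ x → u ∈ S₂ w → ‖w‖ ≤ R)
    (hcq : ∀ wb : Euc p, wb ∈ S₁ xb → ub ∈ S₂ wb →
      ∀ ws : Euc p, ws ∈ coderiv S₂ wb ub 0 →
        (0 : Euc n) ∈ projCoderiv S₁ X xb wb ws → ws = 0)
    (hcvx₁ : Convex ℝ (gph (restr S₁ X))) (hcvx₂ : Convex ℝ (gph S₂))
    (hX : SmoothManifoldAround X xb) :
    Convex ℝ (gph (restr (scomp S₂ S₁) X)) ∧
    ∀ wb : Euc p, wb ∈ S₁ xb → xb ∈ X → ub ∈ S₂ wb →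
      ∀ us : Euc m, projCoderiv (scomp S₂ S₁) X xb ub us =
        {ts : Euc n | ∃ ws ∈ coderiv S₂ wb ub us, ts ∈ projCoderiv S₁ X xb wb ws} := by
  obtain ⟨c, O, Φ, Φ', hOo, hxO, hchar, hder, hcont, hsurjb⟩ := hX
  have hGcvx : Convex ℝ (gph (restr (scomp S₂ S₁) X)) := gph_restr_scomp_convex hcvx₁ hcvx₂
  refine ⟨hGcvx, ?_⟩
  intro wb hwb1 hwbX hwb2 us
  obtain ⟨U, hUo, hxU, hUO, hUsurj⟩ := surj_nhds hOo hxO hcont hsurjb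
  have hker : ∀ x ∈ X ∩ U, tanCone X x = ((Φ' x).ker : Set (Euc n)) :=
    fun x hx => tanCone_eq_ker hOo hchar hder hcont hx.1 (hUO hx.2) (hUsurj x hx.2)
  have hzbG : ((xb, ub) : Euc n × Euc m) ∈ gph (restr (scomp S₂ S₁) X) :=
    ⟨⟨wb, hwb1, hwb2⟩, hwbX⟩
  have hzb1 : ((xb, wb) : Euc n × Euc p) ∈ gph (restr S₁ X) := ⟨hwb1, hwbX⟩
  have hLHS := projCoderiv_char hGcvx hzbG hUo hxU hUO hOo hcont hker us
  have hS1char : ∀ ws : Euc p, projCoderiv S₁ X xb wb ws =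
      {t | t ∈ tanCone X xb ∧ (t, -ws) ∈ cN2 (gph (restr S₁ X)) (xb, wb)} :=
    fun ws => projCoderiv_char hcvx₁ hzb1 hUo hxU hUO hOo hcont hker ws
  have hcod : ∀ (usx : Euc m) (ws : Euc p), ws ∈ coderiv S₂ wb ub usx ↔
      (ws, -usx) ∈ cN2 (gph S₂) (wb, ub) := by
    intro usx ws
    unfold coderiv
    rw [Set.mem_setOf_eq, lNormal2_eq_cN2 hcvx₂]
  rw [hLHS]
  ext ts
  simp only [Set.mem_setOf_eq]
  constructor
  · rintro ⟨htT, htN⟩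
    have hballs : ∀ z' ∈ gph (restr (scomp S₂ S₁) X),
        (inner ℝ ts (z'.1 - xb) : ℝ) + (inner ℝ (-us) (z'.2 - ub) : ℝ) ≤ 0 :=
      fun z' hz' => htN.2 z' hz'
    rcases chain_sep hzb1 hwb2 hballs hcvx₁ hcvx₂ with ⟨ws, hws2, hws1⟩ | ⟨ξ, hξne, hξ2, hξ1⟩
    · refine ⟨ws, (hcod us ws).2 ⟨hwb2, hws2⟩, ?_⟩
      rw [hS1char ws]
      exact ⟨htT, hzb1, hws1⟩
    · exfalso
      have hξcod : ξ ∈ coderiv S₂ wb ub 0 := by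
        apply (hcod 0 ξ).2
        refine ⟨hwb2, fun z' hz' => ?_⟩
        have h1 := hξ2 z' hz'
        have h2 : (inner ℝ (-(0 : Euc m)) (z'.2 - ub) : ℝ) = 0 := by
          rw [neg_zero, inner_zero_left]
        calc (inner ℝ ξ (z'.1 - wb) : ℝ) + (inner ℝ (-(0 : Euc m)) (z'.2 - ub) : ℝ)
            = (inner ℝ ξ (z'.1 - wb) : ℝ) := by rw [h2, add_zero]
          _ ≤ 0 := h1
      have hξproj : (0 : Euc n) ∈ projCoderiv S₁ X xb wb ξ := by
        rw [hS1char ξ]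
        refine ⟨zero_mem_tanCone hwbX, hzb1, fun z' hz' => ?_⟩
        have h1 := hξ1 z' hz'
        have h2 : (inner ℝ ((0 : Euc n)) (z'.1 - xb) : ℝ) = 0 := inner_zero_left _
        have h3 : (inner ℝ (-ξ) (z'.2 - wb) : ℝ) = -(inner ℝ ξ (z'.2 - wb) : ℝ) :=
          inner_neg_left _ _
        calc (inner ℝ ((0 : Euc n)) (z'.1 - xb) : ℝ) + (inner ℝ (-ξ) (z'.2 - wb) : ℝ)
            = -(inner ℝ ξ (z'.2 - wb) : ℝ) := by rw [h2, h3, zero_add]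
          _ ≤ 0 := by linarith
      exact hξne (hcq wb hwb1 hwb2 ξ hξcod hξproj)
  · rintro ⟨ws, hwsc, hts⟩
    rw [hS1char ws] at hts
    obtain ⟨htT, htN1⟩ := hts
    have hwsN := (hcod us ws).1 hwsc
    refine ⟨htT, hzbG, ?_⟩
    rintro z' ⟨⟨w, hw1, hw2⟩, hzX⟩
    have ha := htN1.2 (z'.1, w) ⟨hw1, hzX⟩
    have hb := hwsN.2 (w, z'.2) hw2
    show (inner ℝ ts (z'.1 - xb) : ℝ) + (inner ℝ (-us) (z'.2 - ub) : ℝ) ≤ 0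
    have ha' : (inner ℝ ts (z'.1 - xb) : ℝ) + (inner ℝ (-ws) (w - wb) : ℝ) ≤ 0 := ha
    have hb' : (inner ℝ ws (w - wb) : ℝ) + (inner ℝ (-us) (z'.2 - ub) : ℝ) ≤ 0 := hb
    rw [inner_neg_left] at ha'
    linarith
end
end

section
/- Outer composition with a linear map: let X ⊆ ℝⁿ be a smooth manifold around x̄, S₀ : ℝⁿ ⇉ ℝᵖ osc relative to X with S₀|_X graph-convex, F : ℝᵖ → ℝᵐ linear, S = F∘S₀, ū ∈ S|_X(x̄), and suppose (x,u) ↦ S₀|_X(x) ∩ F⁻¹(u) is locally bounded at (x̄,ū). Then for w̄ ∈ S₀(x̄) ∩ F⁻¹(ū): D*_X S(x̄|ū)(y) = D*_X S₀(x̄|w̄)(F* y) for all y ∈ ℝᵐ, where F* is the adjoint of F. -/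
open Filter Topology Set Metric
open scoped ENNReal NNReal

noncomputable section

variable {E F : Type*}

section AuxConvex

variable {E F : Type*} [NormedAddCommGroup E] [InnerProductSpace ℝ E]
  [NormedAddCommGroup F] [InnerProductSpace ℝ F]

lemma aux_mem_fNormal2 {D : Set (E × F)} {z v : E × F} (hz : z ∈ D)
    (h : ∀ z' ∈ D, (inner ℝ v.1 (z'.1 - z.1) : ℝ) + (inner ℝ v.2 (z'.2 - z.2) : ℝ) ≤ 0) :
    v ∈ fNormal2 D z :=
  ⟨hz, fun ε hε => ⟨1, one_pos, fun z' hz' _ => (h z' hz').trans (by positivity)⟩⟩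

lemma aux_mem_lNormal2 {D : Set (E × F)} {z v : E × F} (hz : z ∈ D)
    (h : ∀ z' ∈ D, (inner ℝ v.1 (z'.1 - z.1) : ℝ) + (inner ℝ v.2 (z'.2 - z.2) : ℝ) ≤ 0) :
    v ∈ lNormal2 D z :=
  ⟨hz, fun _ => z, fun _ => v, fun _ => aux_mem_fNormal2 hz h,
    tendsto_const_nhds, tendsto_const_nhds⟩

lemma aux_fNormal2_global {D : Set (E × F)} (hD : Convex ℝ D) {z v : E × F}
    (hv : v ∈ fNormal2 D z) :
    ∀ z' ∈ D, (inner ℝ v.1 (z'.1 - z.1) : ℝ) + (inner ℝ v.2 (z'.2 - z.2) : ℝ) ≤ 0 := by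
  obtain ⟨hz, hv⟩ := hv
  intro z' hz'
  set P := (inner ℝ v.1 (z'.1 - z.1) : ℝ) + (inner ℝ v.2 (z'.2 - z.2) : ℝ) with hP
  rcases eq_or_ne z' z with rfl | hne
  · simp [hP]
  have hC : (0:ℝ) < ‖z' - z‖ := by rwa [norm_pos_iff, sub_ne_zero]
  have key : ∀ ε > (0:ℝ), P ≤ ε * ‖z' - z‖ := by
    intro ε hε
    obtain ⟨δ, hδ, hδ'⟩ := hv ε hε
    set lam : ℝ := min 1 (δ / (2 * ‖z' - z‖)) with hlam
    have hlam0 : 0 < lam := lt_min one_pos (by positivity)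
    have hlam1 : lam ≤ 1 := min_le_left _ _
    have hz'' : (1 - lam) • z + lam • z' ∈ D :=
      hD hz hz' (by linarith) (le_of_lt hlam0) (by ring)
    have hzeq : (1 - lam) • z + lam • z' = z + lam • (z' - z) := by
      rw [smul_sub, sub_smul, one_smul]; abel
    rw [hzeq] at hz''
    have hdist : ‖(z + lam • (z' - z)) - z‖ = lam * ‖z' - z‖ := by
      rw [add_sub_cancel_left, norm_smul, Real.norm_eq_abs, abs_of_pos hlam0]
    have hlt : ‖(z + lam • (z' - z)) - z‖ < δ := by
      rw [hdist]
      have h2 : lam ≤ δ / (2 * ‖z' - z‖) := min_le_right _ _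
      have : lam * ‖z' - z‖ ≤ δ / (2 * ‖z' - z‖) * ‖z' - z‖ :=
        mul_le_mul_of_nonneg_right h2 (le_of_lt hC)
      have heq : δ / (2 * ‖z' - z‖) * ‖z' - z‖ = δ / 2 := by
        field_simp
      rw [heq] at this
      linarith
    have := hδ' _ hz'' hlt
    have hfst : (z + lam • (z' - z)).1 - z.1 = lam • (z'.1 - z.1) := by
      simp [Prod.fst_add, Prod.smul_fst, Prod.fst_sub]
    have hsnd : (z + lam • (z' - z)).2 - z.2 = lam • (z'.2 - z.2) := by
      simp [Prod.snd_add, Prod.smul_snd, Prod.snd_sub]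
    rw [hfst, hsnd, real_inner_smul_right, real_inner_smul_right, hdist] at this
    have : lam * P ≤ lam * (ε * ‖z' - z‖) := by
      rw [hP]; ring_nf; ring_nf at this; linarith
    exact le_of_mul_le_mul_left this hlam0
  by_contra h
  push_neg at h
  have := key (P / (2 * ‖z' - z‖)) (by positivity)
  have heq : P / (2 * ‖z' - z‖) * ‖z' - z‖ = P / 2 := by field_simp
  rw [heq] at this
  linarith

lemma aux_lNormal2_global {D : Set (E × F)} (hD : Convex ℝ D) {z v : E × F}
    (hv : v ∈ lNormal2 D z) :
    ∀ z' ∈ D, (inner ℝ v.1 (z'.1 - z.1) : ℝ) + (inner ℝ v.2 (z'.2 - z.2) : ℝ) ≤ 0 := by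
  obtain ⟨hz, zk, vk, hfk, hzk, hvk⟩ := hv
  intro z' hz'
  have hk : ∀ k, (inner ℝ (vk k).1 (z'.1 - (zk k).1) : ℝ)
      + (inner ℝ (vk k).2 (z'.2 - (zk k).2) : ℝ) ≤ 0 :=
    fun k => aux_fNormal2_global hD (hfk k) z' hz'
  have h1 : Tendsto (fun k => (vk k).1) atTop (𝓝 v.1) :=
    (continuous_fst.tendsto v).comp hvk
  have h2 : Tendsto (fun k => (vk k).2) atTop (𝓝 v.2) :=
    (continuous_snd.tendsto v).comp hvk
  have h3 : Tendsto (fun k => (zk k).1) atTop (𝓝 z.1) :=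
    (continuous_fst.tendsto z).comp hzk
  have h4 : Tendsto (fun k => (zk k).2) atTop (𝓝 z.2) :=
    (continuous_snd.tendsto z).comp hzk
  have hT : Tendsto (fun k => (inner ℝ (vk k).1 (z'.1 - (zk k).1) : ℝ)
      + (inner ℝ (vk k).2 (z'.2 - (zk k).2) : ℝ)) atTop
      (𝓝 ((inner ℝ v.1 (z'.1 - z.1) : ℝ) + (inner ℝ v.2 (z'.2 - z.2) : ℝ))) :=
    ((h1.inner (tendsto_const_nhds.sub h3)).add (h2.inner (tendsto_const_nhds.sub h4)))
  exact le_of_tendsto hT (Filter.Eventually.of_forall hk)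

lemma aux_projSet_orth {K : Set E} {v t s : E} (ht : t ∈ projSet K v)
    (hadd : ∀ r : ℝ, t + r • s ∈ K) : (inner ℝ (v - t) s : ℝ) = 0 := by
  by_contra ha
  have hs0 : s ≠ 0 := by rintro rfl; exact ha (inner_zero_right _)
  set a : ℝ := inner ℝ (v - t) s with haa
  have hs2 : (0:ℝ) < ‖s‖ ^ 2 := pow_pos (norm_pos_iff.mpr hs0) 2
  have ha2 : (0:ℝ) < a ^ 2 := by
    rw [sq]; exact mul_self_pos.2 ha
  set r : ℝ := a / ‖s‖ ^ 2 with hr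
  have ht' : t + r • s ∈ K := hadd r
  have hkey : v - (t + r • s) = (v - t) - r • s := by abel
  have hnorm : ‖v - (t + r • s)‖ ^ 2 = ‖v - t‖ ^ 2 - a ^ 2 / ‖s‖ ^ 2 := by
    rw [hkey, norm_sub_sq_real, real_inner_smul_right, norm_smul, Real.norm_eq_abs,
      mul_pow, sq_abs, ← haa, hr]
    field_simp
    ring
  have hlt : ‖v - (t + r • s)‖ < ‖v - t‖ := by
    refine lt_of_pow_lt_pow_left₀ 2 (norm_nonneg _) ?_
    rw [hnorm]
    have : 0 < a ^ 2 / ‖s‖ ^ 2 := div_pos ha2 hs2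
    linarith
  have hinf : Metric.infDist v K ≤ ‖v - (t + r • s)‖ := by
    rw [← dist_eq_norm]
    exact Metric.infDist_le_dist_of_mem ht'
  rw [ht.2] at hlt
  linarith

end AuxConvex

lemma aux_seg_mem_tanCone {E : Type*} [NormedAddCommGroup E] [NormedSpace ℝ E]
    {X : Set E} {x x' : E}
    (h : ∀ τ : ℝ, 0 < τ → τ ≤ 1 → x + τ • (x' - x) ∈ X) : x' - x ∈ tanCone X x := by
  refine ⟨fun k => ((k : ℝ) + 1)⁻¹, fun _ => x' - x, fun k => by positivity, ?_,
    tendsto_const_nhds, fun k => h _ (by positivity) ?_⟩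
  · simpa [one_div] using tendsto_one_div_add_atTop_nhds_zero_nat (𝕜 := ℝ)
  · rw [inv_le_one₀ (by positivity)]
    have : (0:ℝ) ≤ (k : ℝ) := Nat.cast_nonneg k
    linarith

lemma aux_tanCone_eq_ker {n c : ℕ} {X O : Set (Euc n)} {Φ : Euc n → Euc c}
    {A : Euc n →L[ℝ] Euc c} {x : Euc n}
    (hO : IsOpen O) (hxO : x ∈ O) (hXO : X ∩ O = {y | y ∈ O ∧ Φ y = 0})
    (hΦx : Φ x = 0) (hf : HasStrictFDerivAt Φ A x) (hsurj : Function.Surjective A) :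
    tanCone X x = {w | A w = 0} := by
  have hmemX : ∀ y, y ∈ O → Φ y = 0 → y ∈ X := by
    intro y h1 h2
    have : y ∈ X ∩ O := by rw [hXO]; exact ⟨h1, h2⟩
    exact this.1
  have hΦ0 : ∀ y, y ∈ X → y ∈ O → Φ y = 0 := by
    intro y h1 h2
    have : y ∈ X ∩ O := ⟨h1, h2⟩
    rw [hXO] at this; exact this.2
  ext w
  constructor
  · rintro ⟨t, w', ht0, ht, hw', hmem⟩
    -- easy direction : tanCone ⊆ ker
    have hh : Tendsto (fun k => t k • w' k) atTop (𝓝 0) := by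
      have := ht.smul hw'
      rwa [zero_smul] at this
    have hxh : Tendsto (fun k => x + t k • w' k) atTop (𝓝 x) := by
      have := (tendsto_const_nhds : Tendsto (fun _ : ℕ => x) atTop (𝓝 x)).add hh
      rwa [add_zero] at this
    have hev : ∀ᶠ k in atTop, Φ (x + t k • w' k) = 0 := by
      filter_upwards [hxh.eventually_mem (hO.mem_nhds hxO)] with k hk
      exact hΦ0 _ (hmem k) hk
    have hlo : (fun k => Φ (x + t k • w' k) - Φ x - A (t k • w' k))
        =o[atTop] fun k => t k • w' k := by
      have h0 := hasFDerivAt_iff_isLittleO_nhds_zero.mp hf.hasFDerivAt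
      exact h0.comp_tendsto hh
    have hlo2 : (fun k => A (t k • w' k)) =o[atTop] fun k => t k • w' k := by
      have : (fun k => Φ (x + t k • w' k) - Φ x - A (t k • w' k))
          =ᶠ[atTop] fun k => -(A (t k • w' k)) := by
        filter_upwards [hev] with k hk
        rw [hk, hΦx]; abel
      have := (hlo.congr' this (Filter.EventuallyEq.refl _ _)).neg_left
      simpa using this
    have hM : ∀ᶠ k in atTop, ‖w' k‖ ≤ ‖w‖ + 1 := by
      have : Tendsto (fun k => ‖w' k‖) atTop (𝓝 ‖w‖) := hw'.norm
      exact this.eventually_le_const (by linarith [norm_nonneg w])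
    have hA0 : Tendsto (fun k => A (w' k)) atTop (𝓝 0) := by
      rw [NormedAddCommGroup.tendsto_nhds_zero]
      intro ε hε
      have hsmall := hlo2.def (show (0:ℝ) < ε / (2 * (‖w‖ + 1)) by positivity)
      filter_upwards [hsmall, hM] with k hk hMk
      rw [map_smul, norm_smul, norm_smul, Real.norm_eq_abs,
        abs_of_pos (ht0 k)] at hk
      have hk2 : t k * ‖A (w' k)‖ ≤ t k * (ε / (2 * (‖w‖ + 1)) * ‖w' k‖) := by
        calc t k * ‖A (w' k)‖ ≤ ε / (2 * (‖w‖ + 1)) * (t k * ‖w' k‖) := hk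
          _ = t k * (ε / (2 * (‖w‖ + 1)) * ‖w' k‖) := by ring
      have hk' : ‖A (w' k)‖ ≤ ε / (2 * (‖w‖ + 1)) * ‖w' k‖ :=
        le_of_mul_le_mul_left hk2 (ht0 k)
      calc ‖A (w' k)‖ ≤ ε / (2 * (‖w‖ + 1)) * ‖w' k‖ := hk'
        _ ≤ ε / (2 * (‖w‖ + 1)) * (‖w‖ + 1) := by
            apply mul_le_mul_of_nonneg_left hMk (by positivity)
        _ = ε / 2 := by field_simp
        _ < ε := by linarith
    have hAw : Tendsto (fun k => A (w' k)) atTop (𝓝 (A w)) :=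
      (A.continuous.tendsto w).comp hw'
    exact tendsto_nhds_unique hAw hA0
  · -- hard direction : ker ⊆ tanCone, via the implicit function theorem
    intro hw
    have hker : w ∈ A.ker := by
      simpa [LinearMap.mem_ker] using hw
    have hf' : A.range = ⊤ := LinearMap.range_eq_top.mpr hsurj
    set g := hf.implicitFunction Φ A hf' with hgdef
    have hg0 : g (Φ x) 0 = x := hf.implicitFunction_apply_image hf'
    have hmap := hf.map_implicitFunction_eq hf'
    have hder := hf.to_implicitFunction hf'
    set wk : A.ker := ⟨w, hker⟩ with hwk
    set sseq : ℕ → A.ker := fun j => ((j : ℝ) + 1)⁻¹ • wk with hsseq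
    have hsseq0 : Tendsto sseq atTop (𝓝 0) := by
      have h1 : Tendsto (fun j : ℕ => ((j : ℝ) + 1)⁻¹) atTop (𝓝 0) := by
        simpa [one_div] using tendsto_one_div_add_atTop_nhds_zero_nat (𝕜 := ℝ)
      have := h1.smul_const wk
      rwa [zero_smul] at this
    set γ : ℕ → Euc n := fun j => g (Φ x) (sseq j) with hγ
    have hγx : Tendsto γ atTop (𝓝 x) := by
      have hc : ContinuousAt (g (Φ x)) 0 := hder.continuousAt
      have := hc.tendsto.comp hsseq0
      rwa [hg0] at this
    have hΦγ : ∀ᶠ j in atTop, Φ (γ j) = 0 := by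
      have hpair : Tendsto (fun j => ((Φ x : Euc c), sseq j)) atTop (𝓝 (Φ x, 0)) :=
        tendsto_const_nhds.prodMk_nhds hsseq0
      filter_upwards [hpair.eventually hmap] with j hj
      rw [hγ]; simp only at hj ⊢; rw [hj, hΦx]
    have hγO : ∀ᶠ j in atTop, γ j ∈ O := hγx.eventually_mem (hO.mem_nhds hxO)
    -- littleO expansion of γ
    have hlo : ∀ cc > (0:ℝ), ∀ᶠ j in atTop,
        ‖γ j - x - ((sseq j : Euc n))‖ ≤ cc * ‖((sseq j : Euc n))‖ := by
      intro cc hcc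
      have h0 := hasFDerivAt_iff_isLittleO_nhds_zero.mp hder.hasFDerivAt
      have h1 := (h0.comp_tendsto hsseq0).def hcc
      filter_upwards [h1] with j hj
      have hj' : ‖g (Φ x) (0 + sseq j) - g (Φ x) 0
          - A.ker.subtypeL (sseq j)‖ ≤ cc * ‖sseq j‖ := hj
      have e1 : g (Φ x) (0 + sseq j) - g (Φ x) 0
          - A.ker.subtypeL (sseq j) = γ j - x - ((sseq j : Euc n)) := by
        rw [zero_add, hg0]; rfl
      rw [e1] at hj'
      exact hj'
    -- the approximating directions
    set w' : ℕ → Euc n := fun j => ((j : ℝ) + 1) • (γ j - x) with hw'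
    have hcoe : ∀ j, ((sseq j : Euc n)) = ((j : ℝ) + 1)⁻¹ • w := by
      intro j; rw [hsseq]; rfl
    have hw'w : Tendsto w' atTop (𝓝 w) := by
      rw [Metric.tendsto_atTop]
      intro ε hε
      have hsm := hlo (ε / (2 * (‖w‖ + 1))) (by positivity)
      obtain ⟨N0, hN0⟩ := Filter.eventually_atTop.mp hsm
      refine ⟨N0, fun j hjN => ?_⟩
      have hj := hN0 j hjN
      rw [dist_eq_norm]
      have hj1 : (0:ℝ) < (j : ℝ) + 1 := by positivity
      have heq : ((j : ℝ) + 1) • (γ j - x - ((sseq j : Euc n))) = w' j - w := by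
        rw [smul_sub, hcoe j, smul_smul, mul_inv_cancel₀ (ne_of_gt hj1), one_smul]
      rw [hcoe j, norm_smul, Real.norm_eq_abs,
        abs_of_pos (by positivity : (0:ℝ) < ((j:ℝ)+1)⁻¹)] at hj
      rw [← heq, norm_smul, Real.norm_eq_abs, abs_of_pos hj1]
      calc ((j:ℝ) + 1) * ‖γ j - x - ((sseq j : Euc n))‖
          ≤ ((j:ℝ) + 1) * (ε / (2 * (‖w‖ + 1)) * (((j:ℝ)+1)⁻¹ * ‖w‖)) :=
            mul_le_mul_of_nonneg_left hj (le_of_lt hj1)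
        _ = ε / (2 * (‖w‖ + 1)) * ‖w‖ := by field_simp
        _ < ε := by
            have h1 : ε / (2 * (‖w‖ + 1)) * ‖w‖ ≤ ε / (2 * (‖w‖ + 1)) * (‖w‖ + 1) := by
              apply mul_le_mul_of_nonneg_left (by linarith) (by positivity)
            have h2 : ε / (2 * (‖w‖ + 1)) * (‖w‖ + 1) = ε / 2 := by field_simp
            linarith
    -- eventual membership in X
    have hevX : ∀ᶠ j : ℕ in atTop, x + ((j : ℝ) + 1)⁻¹ • w' j ∈ X := by
      filter_upwards [hΦγ, hγO] with j h1 h2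
      have hj1 : ((j : ℝ) + 1) ≠ 0 := by positivity
      have : x + ((j : ℝ) + 1)⁻¹ • w' j = γ j := by
        rw [hw', smul_smul, inv_mul_cancel₀ hj1, one_smul]; abel
      rw [this]
      exact hmemX _ h2 h1
    obtain ⟨N, hN⟩ := Filter.eventually_atTop.mp hevX
    refine ⟨fun k => ((k + N : ℕ) + (1:ℝ))⁻¹, fun k => w' (k + N), fun k => by positivity,
      ?_, ?_, fun k => hN (k + N) (Nat.le_add_left N k)⟩
    · have h1 : Tendsto (fun j : ℕ => ((j : ℝ) + 1)⁻¹) atTop (𝓝 0) := by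
        simpa [one_div] using tendsto_one_div_add_atTop_nhds_zero_nat (𝕜 := ℝ)
      exact h1.comp (tendsto_add_atTop_nat N)
    · exact hw'w.comp (tendsto_add_atTop_nat N)

lemma aux_surj_near {n c : ℕ} {A : Euc n →L[ℝ] Euc c} (hsurj : Function.Surjective A) :
    ∃ ε > (0:ℝ), ∀ T : Euc n →L[ℝ] Euc c, ‖T - A‖ < ε → Function.Surjective T := by
  classical
  -- build a right inverse of A
  set M : Euc c →L[ℝ] Euc c := A ∘L (ContinuousLinearMap.adjoint A) with hM
  have hMinj : Function.Injective M := by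
    intro z z' hzz
    have h0 : M (z - z') = 0 := by rw [map_sub, hzz, sub_self]
    have h1 : (inner ℝ ((ContinuousLinearMap.adjoint A) (z - z'))
        ((ContinuousLinearMap.adjoint A) (z - z')) : ℝ) = 0 := by
      rw [ContinuousLinearMap.adjoint_inner_left]
      have : A ((ContinuousLinearMap.adjoint A) (z - z')) = M (z - z') := rfl
      rw [this, h0, inner_zero_right]
    have h2 : (ContinuousLinearMap.adjoint A) (z - z') = 0 :=
      inner_self_eq_zero.mp h1
    have h3 : z - z' = 0 := by
      obtain ⟨u, hu⟩ := hsurj (z - z')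
      have h4 : (inner ℝ (z - z') (A u) : ℝ) = 0 := by
        rw [← ContinuousLinearMap.adjoint_inner_left, h2, inner_zero_left]
      rw [hu] at h4
      exact inner_self_eq_zero.mp h4
    have := sub_eq_zero.mp h3
    exact this
  have hMbij : Function.Bijective (M : Euc c →ₗ[ℝ] Euc c) :=
    ⟨hMinj, LinearMap.injective_iff_surjective.mp hMinj⟩
  set e : Euc c ≃ₗ[ℝ] Euc c := LinearEquiv.ofBijective (M : Euc c →ₗ[ℝ] Euc c) hMbij
    with he
  set E : Euc c ≃L[ℝ] Euc c := e.toContinuousLinearEquiv with hE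
  set B : Euc c →L[ℝ] Euc n :=
    (ContinuousLinearMap.adjoint A) ∘L (E.symm : Euc c →L[ℝ] Euc c) with hB
  have hABpt : ∀ z, (A ∘L B) z = ContinuousLinearMap.id ℝ (Euc c) z := by
    intro z
    have hsymm : ((E.symm : Euc c →L[ℝ] Euc c) : Euc c → Euc c) z = e.symm z := by
      have := LinearEquiv.coe_toContinuousLinearEquiv_symm' e
      rw [hE]
      exact congrFun this z
    have h1 : (A ∘L B) z = A ((ContinuousLinearMap.adjoint A)
        ((E.symm : Euc c →L[ℝ] Euc c) z)) := rfl
    rw [h1, hsymm]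
    have h2 : A ((ContinuousLinearMap.adjoint A) (e.symm z)) = e (e.symm z) := rfl
    rw [h2, e.apply_symm_apply]
    rfl
  have hAB : A ∘L B = ContinuousLinearMap.id ℝ (Euc c) :=
    ContinuousLinearMap.ext hABpt
  refine ⟨(‖B‖ + 1)⁻¹, by positivity, fun T hT => ?_⟩
  set D : Euc c →L[ℝ] Euc c := (T - A) ∘L B with hD
  have hDnorm : ‖D‖ < 1 := by
    calc ‖D‖ ≤ ‖T - A‖ * ‖B‖ := ContinuousLinearMap.opNorm_comp_le _ _
      _ ≤ ‖T - A‖ * (‖B‖ + 1) := by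
          apply mul_le_mul_of_nonneg_left (by linarith) (norm_nonneg _)
      _ < (‖B‖ + 1)⁻¹ * (‖B‖ + 1) := by
          apply mul_lt_mul_of_pos_right hT (by positivity)
      _ = 1 := by field_simp
  have hDnorm' : ‖-D‖ < 1 := by rwa [norm_neg]
  set u : (Euc c →L[ℝ] Euc c)ˣ := Units.oneSub (-D) hDnorm' with hu
  have huval : (u : Euc c →L[ℝ] Euc c) = 1 + D := by
    rw [hu, Units.val_oneSub, sub_neg_eq_add]
  have hTB : T ∘L B = 1 + D := by
    have : T ∘L B = A ∘L B + (T - A) ∘L B := by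
      rw [← ContinuousLinearMap.add_comp, add_sub_cancel]
    rw [this, hAB, ← hD]
    rfl
  have hTright : T ∘L (B ∘L ((u⁻¹ : (Euc c →L[ℝ] Euc c)ˣ) : Euc c →L[ℝ] Euc c))
      = ContinuousLinearMap.id ℝ (Euc c) := by
    have h1 : T ∘L (B ∘L (u⁻¹ : (Euc c →L[ℝ] Euc c)ˣ))
        = (T ∘L B) * ((u⁻¹ : (Euc c →L[ℝ] Euc c)ˣ) : Euc c →L[ℝ] Euc c) := rfl
    rw [h1, hTB, ← huval]
    have := u.mul_inv
    rw [this]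
    rfl
  intro z
  refine ⟨(B ∘L ((u⁻¹ : (Euc c →L[ℝ] Euc c)ˣ) : Euc c →L[ℝ] Euc c)) z, ?_⟩
  have := congrArg (fun (S : Euc c →L[ℝ] Euc c) => S z) hTright
  simpa using this

lemma aux_projCoderiv_eq {n q c : ℕ} {S : Euc n → Set (Euc q)} {X : Set (Euc n)}
    {xb : Euc n} {ub : Euc q} {O : Set (Euc n)} {Φ : Euc n → Euc c}
    {Φ' : Euc n → Euc n →L[ℝ] Euc c}
    (hchart : IsSmoothMfdChart X xb O Φ Φ')
    (hcvx : Convex ℝ (gph (restr S X)))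
    (hmem : (xb, ub) ∈ gph (restr S X)) (y : Euc q) :
    projCoderiv S X xb ub y =
      {t | t ∈ tanCone X xb ∧ ∀ z' ∈ gph (restr S X),
        (inner ℝ t (z'.1 - xb) : ℝ) + (inner ℝ (-y) (z'.2 - ub) : ℝ) ≤ 0} := by
  obtain ⟨hO, hxbO, hXO, hderiv, hcont, hsurjb⟩ := hchart
  have hstrict : ∀ x ∈ O, HasStrictFDerivAt Φ (Φ' x) x := by
    intro x hx
    apply hasStrictFDerivAt_of_hasFDerivAt_of_continuousAt
    · filter_upwards [hO.mem_nhds hx] with y hy using hderiv y hy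
    · exact hcont.continuousAt (hO.mem_nhds hx)
  obtain ⟨ε, hε, hball⟩ := aux_surj_near hsurjb
  set U : Set (Euc n) := O ∩ Φ' ⁻¹' (Metric.ball (Φ' xb) ε) with hU
  have hUopen : IsOpen U := hcont.isOpen_inter_preimage hO Metric.isOpen_ball
  have hxbU : xb ∈ U := ⟨hxbO, by simp [Metric.mem_ball, dist_self, hε]⟩
  have hUsurj : ∀ x ∈ U, Function.Surjective (Φ' x) := by
    intro x hx
    apply hball
    have := hx.2
    rwa [Set.mem_preimage, Metric.mem_ball, dist_eq_norm] at this
  have hXΦ : ∀ x, x ∈ X → x ∈ O → Φ x = 0 := by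
    intro x h1 h2
    have : x ∈ X ∩ O := ⟨h1, h2⟩
    rw [hXO] at this; exact this.2
  have htan : ∀ x, x ∈ X → x ∈ U → tanCone X x = {w | Φ' x w = 0} := by
    intro x hx1 hx2
    exact aux_tanCone_eq_ker hO hx2.1 hXO (hXΦ x hx1 hx2.1) (hstrict x hx2.1) (hUsurj x hx2)
  have hxbX : xb ∈ X := hmem.2
  ext t
  constructor
  · -- hard direction : the outer limit collapses
    rintro ⟨zk, qk, hzk, hqk, hzlim, hqlim⟩
    choose vk hvk hprojk using hqk
    have hx1 : Tendsto (fun k => (zk k).1) atTop (𝓝 xb) :=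
      (continuous_fst.tendsto _).comp hzlim
    have hx2 : Tendsto (fun k => (zk k).2) atTop (𝓝 ub) :=
      (continuous_snd.tendsto _).comp hzlim
    have hq1 : Tendsto (fun k => (qk k).1) atTop (𝓝 t) :=
      (continuous_fst.tendsto _).comp hqlim
    have hq2 : Tendsto (fun k => (qk k).2) atTop (𝓝 (-y)) :=
      (continuous_snd.tendsto _).comp hqlim
    have hXk : ∀ k, (zk k).1 ∈ X := fun k => (hzk k).2
    have hevU : ∀ᶠ k in atTop, (zk k).1 ∈ U := hx1.eventually_mem (hUopen.mem_nhds hxbU)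
    obtain ⟨N, hN⟩ := Filter.eventually_atTop.mp hevU
    have hkey : ∀ z' ∈ gph (restr S X), ∀ k, N ≤ k →
        (inner ℝ (qk k).1 (z'.1 - (zk k).1) : ℝ)
          + (inner ℝ (qk k).2 (z'.2 - (zk k).2) : ℝ) ≤ 0 := by
      intro z' hz' k hk
      have htank : tanCone X (zk k).1 = {w | Φ' (zk k).1 w = 0} :=
        htan _ (hXk k) (hN k hk)
      have hglob := aux_lNormal2_global hcvx (hvk k) z' hz'
      have hglob' : (inner ℝ (vk k) (z'.1 - (zk k).1) : ℝ)
          + (inner ℝ (qk k).2 (z'.2 - (zk k).2) : ℝ) ≤ 0 := hglob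
      have hd : z'.1 - (zk k).1 ∈ tanCone X (zk k).1 := by
        apply aux_seg_mem_tanCone
        intro τ hτ0 hτ1
        have hzc := hcvx (hzk k) hz'
          (by linarith : (0:ℝ) ≤ 1 - τ) (le_of_lt hτ0) (by ring)
        have h5 : ((1 - τ) • zk k + τ • z').1 ∈ X := hzc.2
        have h6 : ((1 - τ) • zk k + τ • z').1 = (1 - τ) • (zk k).1 + τ • z'.1 := rfl
        have h7 : (1 - τ) • (zk k).1 + τ • z'.1
            = (zk k).1 + τ • (z'.1 - (zk k).1) := by
          rw [smul_sub, sub_smul, one_smul]; abel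
        rw [h6, h7] at h5
        exact h5
      have horth : (inner ℝ (vk k - (qk k).1) (z'.1 - (zk k).1) : ℝ) = 0 := by
        apply aux_projSet_orth (hprojk k)
        intro r
        have h1 : Φ' (zk k).1 ((qk k).1) = 0 := by
          have := (hprojk k).1; rw [htank] at this; exact this
        have h2 : Φ' (zk k).1 (z'.1 - (zk k).1) = 0 := by
          rw [htank] at hd; exact hd
        rw [htank]
        show Φ' (zk k).1 ((qk k).1 + r • (z'.1 - (zk k).1)) = 0
        rw [map_add, map_smul, h1, h2, smul_zero, add_zero]
      have hsplit : (inner ℝ (vk k) (z'.1 - (zk k).1) : ℝ)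
          = (inner ℝ (qk k).1 (z'.1 - (zk k).1) : ℝ)
            + (inner ℝ (vk k - (qk k).1) (z'.1 - (zk k).1) : ℝ) := by
        rw [← inner_add_left, add_sub_cancel]
      linarith
    constructor
    · -- t belongs to the tangent cone at xb
      have htA : Φ' xb t = 0 := by
        have hev : ∀ᶠ k in atTop, Φ' ((zk k).1) ((qk k).1) = 0 := by
          rw [eventually_atTop]
          refine ⟨N, fun k hk => ?_⟩
          have := (hprojk k).1
          rw [htan _ (hXk k) (hN k hk)] at this
          exact this
        have hΦ'k : Tendsto (fun k => Φ' ((zk k).1)) atTop (𝓝 (Φ' xb)) :=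
          ((hcont.continuousAt (hO.mem_nhds hxbO)).tendsto).comp hx1
        have hT : Tendsto (fun k => Φ' ((zk k).1) ((qk k).1)) atTop (𝓝 (Φ' xb t)) :=
          (isBoundedBilinearMap_apply.continuous.tendsto _).comp (hΦ'k.prodMk_nhds hq1)
        have h0 : Tendsto (fun k => Φ' ((zk k).1) ((qk k).1)) atTop (𝓝 0) :=
          (tendsto_const_nhds : Tendsto (fun _ : ℕ => (0 : Euc c)) atTop (𝓝 0)).congr'
            (by filter_upwards [hev] with k hk; rw [hk])
        exact tendsto_nhds_unique hT h0
      rw [htan xb hxbX hxbU]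
      exact htA
    · intro z' hz'
      have hT : Tendsto (fun k => (inner ℝ (qk k).1 (z'.1 - (zk k).1) : ℝ)
          + (inner ℝ (qk k).2 (z'.2 - (zk k).2) : ℝ)) atTop
          (𝓝 ((inner ℝ t (z'.1 - xb) : ℝ) + (inner ℝ (-y) (z'.2 - ub) : ℝ))) :=
        (hq1.inner (tendsto_const_nhds.sub hx1)).add
          (hq2.inner (tendsto_const_nhds.sub hx2))
      apply le_of_tendsto hT
      rw [eventually_atTop]
      exact ⟨N, fun k hk => hkey z' hz' k hk⟩
  · -- easy direction : constant sequences
    rintro ⟨htc, hineq⟩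
    refine ⟨fun _ => (xb, ub), fun _ => (t, -y), fun _ => hmem, fun k => ?_,
      tendsto_const_nhds, tendsto_const_nhds⟩
    refine ⟨t, ?_, ?_⟩
    · exact aux_mem_lNormal2 hmem hineq
    · exact ⟨htc, by rw [sub_self, norm_zero]; exact (Metric.infDist_zero_of_mem htc).symm⟩

lemma aux_gph_scomp {n p m : ℕ} (S₀ : Euc n → Set (Euc p)) (L : Euc p →L[ℝ] Euc m)
    (X : Set (Euc n)) :
    gph (restr (scomp (fun w => ({L w} : Set (Euc m))) S₀) X)
      = (fun z : Euc n × Euc p => (z.1, L z.2)) '' gph (restr S₀ X) := by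
  ext z
  constructor
  · rintro ⟨⟨w, hw, hu⟩, hXz⟩
    rw [Set.mem_singleton_iff] at hu
    refine ⟨(z.1, w), ⟨hw, hXz⟩, ?_⟩
    show (z.1, L w) = z
    rw [← hu]
  · rintro ⟨⟨x, w⟩, ⟨hw, hXz⟩, rfl⟩
    exact ⟨⟨w, hw, rfl⟩, hXz⟩


/-- Outer composition with a linear map: for `S = F∘S₀` with
`F` linear, `S₀|_X` graph-convex and osc relative to the smooth manifold `X`,
and local boundedness of `(x,u) ↦ S₀|_X(x) ∩ F⁻¹(u)`, one has
`D*_X S(xb|ub)(y) = D*_X S₀(xb|wb)(F* y)` for `wb ∈ S₀(xb) ∩ F⁻¹(ub)`. -/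
theorem stmt17 {n p m : ℕ} (S₀ : Euc n → Set (Euc p)) (L : Euc p →L[ℝ] Euc m)
    (X : Set (Euc n)) (hXcl : IsClosed X) (xb : Euc n) (ub : Euc m)
    (hX : SmoothManifoldAround X xb)
    (h₀osc : OscRel S₀ X) (hcvx : Convex ℝ (gph (restr S₀ X)))
    (hmem : (xb, ub) ∈ gph (restr (scomp (fun w => {L w}) S₀) X))
    (hbdd : ∃ δ > 0, ∃ R : ℝ, ∀ x ∈ X, ∀ u : Euc m, ‖x - xb‖ < δ → ‖u - ub‖ < δ →
      ∀ w : Euc p, w ∈ S₀ x → L w = u → ‖w‖ ≤ R) :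
    ∀ wb : Euc p, wb ∈ S₀ xb → L wb = ub →
      ∀ y : Euc m, projCoderiv (scomp (fun w => {L w}) S₀) X xb ub y =
        projCoderiv S₀ X xb wb (ContinuousLinearMap.adjoint L y) := by
  intro wb hwb hLwb y
  obtain ⟨c, O, Φ, Φ', hchart⟩ := hX
  have hxbX : xb ∈ X := hmem.2
  have hmem₀ : (xb, wb) ∈ gph (restr S₀ X) := ⟨hwb, hxbX⟩
  have himg := aux_gph_scomp S₀ L X
  have hcvxS : Convex ℝ (gph (restr (scomp (fun w => ({L w} : Set (Euc m))) S₀) X)) := by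
    rw [himg]
    refine hcvx.is_linear_image ⟨fun a b => ?_, fun r a => ?_⟩
    · show ((a + b).1, L (a + b).2) = ((a.1, L a.2) + (b.1, L b.2))
      rw [Prod.ext_iff]
      constructor
      · rfl
      · show L (a.2 + b.2) = L a.2 + L b.2
        rw [map_add]
    · show ((r • a).1, L ((r • a).2)) = r • (a.1, L a.2)
      rw [Prod.ext_iff]
      constructor
      · rfl
      · show L (r • a.2) = r • L a.2
        rw [map_smul]
  rw [aux_projCoderiv_eq hchart hcvxS hmem y,
      aux_projCoderiv_eq hchart hcvx hmem₀ (ContinuousLinearMap.adjoint L y)]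
  ext t
  simp only [Set.mem_setOf_eq]
  constructor
  · rintro ⟨htc, hineq⟩
    refine ⟨htc, fun z' hz' => ?_⟩
    have h1 := hineq (z'.1, L z'.2) ⟨⟨z'.2, hz'.1, rfl⟩, hz'.2⟩
    have h2 : (inner ℝ (-(ContinuousLinearMap.adjoint L y)) (z'.2 - wb) : ℝ)
        = (inner ℝ (-y) (L z'.2 - ub) : ℝ) := by
      rw [inner_neg_left, inner_neg_left, ContinuousLinearMap.adjoint_inner_left,
        map_sub, hLwb]
    rw [h2]
    exact h1
  · rintro ⟨htc, hineq⟩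
    refine ⟨htc, fun z' hz' => ?_⟩
    rw [himg] at hz'
    obtain ⟨zw, hzw, rfl⟩ := hz'
    have h1 := hineq zw hzw
    have h2 : (inner ℝ (-(ContinuousLinearMap.adjoint L y)) (zw.2 - wb) : ℝ)
        = (inner ℝ (-y) (L zw.2 - ub) : ℝ) := by
      rw [inner_neg_left, inner_neg_left, ContinuousLinearMap.adjoint_inner_left,
        map_sub, hLwb]
    rw [h2] at h1
    exact h1
end
end
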